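/- arXiv:1801.01696 — 3 statements merged into one kernel-verified Lean document; each statement's English description precedes it below -/
import Mathlib

section
/- Lower bound on the posterior second moment at zero signal for the Laplace slab: if γ is the standard Laplace density, there exists C_0 > 0 such that for every real x and every α ∈ [0,1], r_2(α,0,x) ≥ C_0·α. -/
/-!
Statement 6: lower bound on the posterior second moment at zero signal
for the Laplace slab.
-/

open MeasureTheory Real Set

noncomputable section

/-- Standard normal density. -/
def phi (x : ℝ) : ℝ := Real.exp (-x ^ 2 / 2) / Real.sqrt (2 * Real.pi)

/-- Standard Laplace density. -/
def lapDen (x : ℝ) : ℝ := Real.exp (-|x|) / 2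

/-- Standard Cauchy density. -/
def cauchyDen (x : ℝ) : ℝ := (Real.pi * (1 + x ^ 2))⁻¹

/-- Convolution `g = φ * γ`. -/
def conv (γ : ℝ → ℝ) (x : ℝ) : ℝ := ∫ u, phi (x - u) * γ u

/-- Posterior weight `a(x) = α g(x) / ((1-α) φ(x) + α g(x))`. -/
def aWt (γ : ℝ → ℝ) (α x : ℝ) : ℝ :=
  α * conv γ x / ((1 - α) * phi x + α * conv γ x)

/-- Density of the single-coordinate posterior with respect to `volume + δ₀`:
the point mass `1 - a(x)` at `0`, and the continuous part `a(x) γ_x`. -/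
def coordDen (γ : ℝ → ℝ) (α x u : ℝ) : ℝ :=
  if u = 0 then 1 - aWt γ α x else aWt γ α x * (phi (x - u) * γ u / conv γ x)

/-- Single-coordinate posterior `π_α(⋅|x) = (1 - a(x)) δ₀ + a(x) γ_x`. -/
def coordPost (γ : ℝ → ℝ) (α x : ℝ) : Measure ℝ :=
  (volume + Measure.dirac (0 : ℝ)).withDensity fun u => ENNReal.ofReal (coordDen γ α x u)

/-- Posterior second moment `r₂(α, μ, x) = ∫ (u - μ)² dπ_α(u|x)`. -/
def r2 (γ : ℝ → ℝ) (α μ x : ℝ) : ℝ := ∫ u, (u - μ) ^ 2 ∂(coordPost γ α x)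

lemma phi_pos (x : ℝ) : 0 < phi x := by
  unfold phi
  have : (0:ℝ) < Real.sqrt (2 * Real.pi) := Real.sqrt_pos.mpr (by positivity)
  positivity

lemma lap_pos (x : ℝ) : 0 < lapDen x := by unfold lapDen; positivity

lemma lap_le (x : ℝ) : lapDen x ≤ 1 / 2 := by
  unfold lapDen
  have : Real.exp (-|x|) ≤ 1 := Real.exp_le_one_iff.mpr (by simp [abs_nonneg])
  linarith

lemma one_le_sqrt2pi : (1:ℝ) ≤ Real.sqrt (2 * Real.pi) := by
  rw [show (1:ℝ) = Real.sqrt 1 by simp]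
  exact Real.sqrt_le_sqrt (by nlinarith [Real.pi_gt_three])

lemma phi_le_exp (x : ℝ) : phi x ≤ Real.exp (-x ^ 2 / 2) := by
  unfold phi
  rw [div_le_iff₀ (by linarith [one_le_sqrt2pi])]
  nlinarith [Real.exp_pos (-x^2/2), one_le_sqrt2pi]

def hdom (v : ℝ) : ℝ := (1 + v ^ 2) * Real.exp (-(1/2) * v ^ 2)

lemma integrable_hdom : Integrable hdom := by
  have h1 : Integrable (fun v : ℝ => Real.exp (-(1/2) * v ^ 2)) :=
    integrable_exp_neg_mul_sq (by norm_num)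
  have h2 : Integrable (fun v : ℝ => v ^ (2:ℝ) * Real.exp (-(1/2) * v ^ 2)) :=
    integrable_rpow_mul_exp_neg_mul_sq (b := 1/2) (s := 2) (by norm_num) (by norm_num)
  have h2' : Integrable (fun v : ℝ => v ^ 2 * Real.exp (-(1/2) * v ^ 2)) := by
    refine h2.congr ?_
    filter_upwards with v
    rw [show ((2:ℝ)) = ((2:ℕ):ℝ) by norm_num, Real.rpow_natCast]
  have := h1.add h2'
  refine this.congr ?_
  filter_upwards with v
  simp only [Pi.add_apply]
  unfold hdom; ring

lemma cont_F1 (x : ℝ) : Continuous fun u => phi (x - u) * lapDen u := by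
  unfold phi lapDen
  fun_prop

lemma F1_nonneg (x u : ℝ) : 0 ≤ phi (x - u) * lapDen u :=
  le_of_lt (mul_pos (phi_pos _) (lap_pos _))

lemma F1_le_hdom (x u : ℝ) : phi (x - u) * lapDen u ≤ (1 + x ^ 2) * hdom (x - u) := by
  have h1 : phi (x - u) ≤ Real.exp (-(1/2) * (x-u)^2) := by
    have := phi_le_exp (x - u); rw [show -(x-u)^2/2 = -(1/2)*(x-u)^2 by ring] at this; exact this
  have h2 : lapDen u ≤ 1/2 := lap_le u
  have h3 : (0:ℝ) < Real.exp (-(1/2) * (x-u)^2) := Real.exp_pos _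
  unfold hdom
  nlinarith [mul_le_mul h1 h2 (lap_pos u).le h3.le, mul_nonneg (sq_nonneg x) h3.le,
    mul_nonneg (sq_nonneg (x-u)) h3.le,
    mul_nonneg (mul_nonneg (sq_nonneg x) (sq_nonneg (x-u))) h3.le]

lemma F2_le_hdom (x u : ℝ) : u ^ 2 * (phi (x - u) * lapDen u) ≤ (1 + x ^ 2) * hdom (x - u) := by
  have h1 : phi (x - u) ≤ Real.exp (-(1/2) * (x-u)^2) := by
    have := phi_le_exp (x - u); rw [show -(x-u)^2/2 = -(1/2)*(x-u)^2 by ring] at this; exact this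
  have h2 : lapDen u ≤ 1/2 := lap_le u
  have h3 : (0:ℝ) < Real.exp (-(1/2) * (x-u)^2) := Real.exp_pos _
  have hu : u ^ 2 ≤ 2 * (x - u)^2 + 2 * x^2 := by nlinarith [sq_nonneg (2*x - u)]
  have step1 : u ^ 2 * (phi (x-u) * lapDen u) ≤ u ^ 2 * (Real.exp (-(1/2) * (x-u)^2) * (1/2)) :=
    mul_le_mul_of_nonneg_left (mul_le_mul h1 h2 (lap_pos u).le h3.le) (sq_nonneg u)
  unfold hdom
  nlinarith [step1, mul_le_mul_of_nonneg_right hu h3.le,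
    mul_nonneg (mul_nonneg (sq_nonneg x) (sq_nonneg (x-u))) h3.le]

lemma I1 (x : ℝ) : Integrable fun u => phi (x - u) * lapDen u := by
  refine Integrable.mono' ((integrable_hdom.comp_sub_left x).const_mul (1 + x ^ 2)) ((cont_F1 x).aestronglyMeasurable) ?_
  filter_upwards with u
  rw [Real.norm_of_nonneg (F1_nonneg x u)]
  exact F1_le_hdom x u

lemma I2 (x : ℝ) : Integrable fun u => u ^ 2 * (phi (x - u) * lapDen u) := by
  refine Integrable.mono' ((integrable_hdom.comp_sub_left x).const_mul (1 + x ^ 2)) ?_ ?_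
  · exact (Continuous.mul (by fun_prop) (cont_F1 x)).aestronglyMeasurable
  filter_upwards with u
  rw [Real.norm_of_nonneg (mul_nonneg (sq_nonneg u) (F1_nonneg x u))]
  exact F2_le_hdom x u

lemma lower_helper {a b c : ℝ} (hab : a ≤ b) {f : ℝ → ℝ} (hf : Integrable f)
    (hnn : ∀ u, 0 ≤ f u) (hc : ∀ u ∈ Icc a b, c ≤ f u) :
    c * (b - a) ≤ ∫ u, f u := by
  have h1 : ∫ _ in Icc a b, c ≤ ∫ u in Icc a b, f u := by
    refine setIntegral_mono_on ?_ hf.integrableOn measurableSet_Icc hc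
    exact integrableOn_const (by rw [Real.volume_Icc]; exact ENNReal.ofReal_ne_top)
  have h2 : ∫ _ in Icc a b, c = c * (b - a) := by
    rw [setIntegral_const, measureReal_def, Real.volume_Icc, ENNReal.toReal_ofReal (by linarith), smul_eq_mul,
      mul_comm]
  have h3 : ∫ u in Icc a b, f u ≤ ∫ u, f u :=
    setIntegral_le_integral hf (Filter.Eventually.of_forall hnn)
  linarith

lemma upper_helper {a b c : ℝ} (hab : a ≤ b) {f : ℝ → ℝ} (hf : IntegrableOn f (Icc a b))
    (hc : ∀ u ∈ Icc a b, f u ≤ c) : ∫ u in Icc a b, f u ≤ c * (b - a) := by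
  have h1 : ∫ u in Icc a b, f u ≤ ∫ _ in Icc a b, c := by
    refine setIntegral_mono_on hf ?_ measurableSet_Icc hc
    exact integrableOn_const (by rw [Real.volume_Icc]; exact ENNReal.ofReal_ne_top)
  have h2 : ∫ _ in Icc a b, c = c * (b - a) := by
    rw [setIntegral_const, measureReal_def, Real.volume_Icc, ENNReal.toReal_ofReal (by linarith), smul_eq_mul,
      mul_comm]
  linarith

def Kk (x : ℝ) : ℝ := ∫ u, u ^ 2 * (phi (x - u) * lapDen u)

lemma K_nonneg (x : ℝ) : 0 ≤ Kk x :=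
  integral_nonneg fun u => mul_nonneg (sq_nonneg u) (F1_nonneg x u)

lemma phi_ratio {y z : ℝ} (c : ℝ) (h : y ^ 2 ≤ z ^ 2 + 2 * c) : phi y ≥ Real.exp (-c) * phi z := by
  unfold phi
  rw [ge_iff_le, mul_div_assoc', div_le_div_iff_of_pos_right (Real.sqrt_pos.mpr (by positivity)),
    ← Real.exp_add]
  apply Real.exp_le_exp.mpr
  linarith

lemma phi_le_K {x : ℝ} (hx : 0 ≤ x) : phi x ≤ 2 * Real.exp 4 * Kk x := by
  have key : (Real.exp (-4) / 2 * phi x) * (2 - 1) ≤ Kk x := by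
    refine lower_helper (by norm_num) (I2 x)
      (fun u => mul_nonneg (sq_nonneg u) (F1_nonneg x u)) ?_
    rintro u ⟨h1, h2⟩
    have hphi : Real.exp (-2) * phi x ≤ phi (x - u) :=
      phi_ratio 2 (by nlinarith [mul_nonneg hx (by linarith : (0:ℝ) ≤ u)])
    have hlap : Real.exp (-2) / 2 ≤ lapDen u := by
      unfold lapDen
      have : Real.exp (-2) ≤ Real.exp (-|u|) := by
        apply Real.exp_le_exp.mpr
        rw [abs_of_nonneg (by linarith)]; linarith
      linarith
    have hu2 : (1:ℝ) ≤ u ^ 2 := by nlinarith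
    have hmm : (Real.exp (-2) * phi x) * (Real.exp (-2) / 2) ≤ phi (x - u) * lapDen u :=
      mul_le_mul hphi hlap (by positivity) (phi_pos _).le
    have he : Real.exp (-2) * Real.exp (-2) = Real.exp (-4:ℝ) := by
      rw [← Real.exp_add]; norm_num
    nlinarith [F1_nonneg x u, phi_pos x, Real.exp_pos (-2:ℝ)]
  have e : Real.exp 4 * Real.exp (-4) = 1 := by rw [← Real.exp_add]; norm_num
  have e' : Real.exp 4 * Real.exp (-4) * phi x = phi x := by rw [e, one_mul]
  nlinarith [mul_le_mul_of_nonneg_left key (by positivity : (0:ℝ) ≤ 2 * Real.exp 4)]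

lemma phi1_le_K {x : ℝ} (hx : 0 ≤ x) : phi (x - 1) ≤ 2 * Real.exp (7/2) * Kk x := by
  have key : (Real.exp (-(3/2)) * phi (x - 1) * (Real.exp (-2) / 2)) * (2 - 1) ≤ Kk x := by
    refine lower_helper (by norm_num) (I2 x)
      (fun u => mul_nonneg (sq_nonneg u) (F1_nonneg x u)) ?_
    rintro u ⟨h1, h2⟩
    have hphi : Real.exp (-(3/2)) * phi (x - 1) ≤ phi (x - u) :=
      phi_ratio (3/2) (by nlinarith [mul_nonneg hx (by linarith : (0:ℝ) ≤ u - 1)])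
    have hlap : Real.exp (-2) / 2 ≤ lapDen u := by
      unfold lapDen
      have : Real.exp (-2) ≤ Real.exp (-|u|) := by
        apply Real.exp_le_exp.mpr
        rw [abs_of_nonneg (by linarith)]; linarith
      linarith
    have hu2 : (1:ℝ) ≤ u ^ 2 := by nlinarith
    have hmm : (Real.exp (-(3/2)) * phi (x - 1)) * (Real.exp (-2) / 2) ≤ phi (x - u) * lapDen u :=
      mul_le_mul hphi hlap (by positivity) (phi_pos _).le
    nlinarith [F1_nonneg x u, phi_pos (x - 1), Real.exp_pos (-(3/2):ℝ), Real.exp_pos (-2:ℝ)]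
  have e1 : Real.exp (-(3/2)) * Real.exp (-2) = Real.exp (-(7/2) : ℝ) := by
    rw [← Real.exp_add]; norm_num
  have e2 : Real.exp (7/2) * Real.exp (-(7/2)) = 1 := by rw [← Real.exp_add]; norm_num
  have e2' : Real.exp (7/2) * Real.exp (-(7/2)) * phi (x-1) = phi (x-1) := by rw [e2, one_mul]
  have e1' : Real.exp (7/2) * (Real.exp (-(3/2)) * Real.exp (-2)) * phi (x-1) = phi (x-1) := by
    rw [e1]; rw [e2, one_mul]
  nlinarith [mul_le_mul_of_nonneg_left key (by positivity : (0:ℝ) ≤ 2 * Real.exp (7/2))]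

lemma g_nonneg (x : ℝ) : 0 ≤ conv lapDen x := integral_nonneg fun u => F1_nonneg x u

lemma g_pos (x : ℝ) : 0 < conv lapDen x := by
  have key : (Real.exp (-0) * phi (|x| + 2) * (Real.exp (-2) / 2)) * (2 - 1) ≤ conv lapDen x := by
    refine lower_helper (by norm_num) (I1 x) (fun u => F1_nonneg x u) ?_
    rintro u ⟨h1, h2⟩
    have hphi : Real.exp (-0) * phi (|x| + 2) ≤ phi (x - u) := by
      refine phi_ratio 0 ?_
      nlinarith [abs_nonneg x, sq_abs x,
        mul_le_mul_of_nonneg_left (neg_abs_le x) (by linarith : (0:ℝ) ≤ u),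
        mul_le_mul_of_nonneg_right h2 (abs_nonneg x)]
    have hlap : Real.exp (-2) / 2 ≤ lapDen u := by
      unfold lapDen
      have : Real.exp (-2) ≤ Real.exp (-|u|) := by
        apply Real.exp_le_exp.mpr
        rw [abs_of_nonneg (by linarith)]; linarith
      linarith
    exact mul_le_mul hphi hlap (by positivity) (phi_pos _).le
  have hpos : (0:ℝ) < (Real.exp (-0) * phi (|x| + 2) * (Real.exp (-2) / 2)) * (2 - 1) := by
    have := phi_pos (|x| + 2); positivity
  linarith

lemma g_le {x : ℝ} (hx : 0 ≤ x) :
    conv lapDen x ≤ Real.exp (1/2) * phi (x - 1) + Kk x := by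
  have split : conv lapDen x
      = (∫ u in Icc (-1:ℝ) 1, phi (x - u) * lapDen u)
        + ∫ u in (Icc (-1:ℝ) 1)ᶜ, phi (x - u) * lapDen u :=
    (integral_add_compl measurableSet_Icc (I1 x)).symm
  have b1 : (∫ u in Icc (-1:ℝ) 1, phi (x - u) * lapDen u)
      ≤ (Real.exp (1/2) * phi (x - 1) * (1/2)) * (1 - (-1)) := by
    refine upper_helper (by norm_num) (I1 x).integrableOn ?_
    rintro u ⟨h1, h2⟩
    have hphi : phi (x - u) ≤ Real.exp (1/2) * phi (x - 1) := by
      have := phi_ratio (y := x - 1) (z := x - u) (1/2)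
        (by nlinarith [mul_nonneg hx (by linarith : (0:ℝ) ≤ 1 - u), sq_nonneg u])
      -- this : exp(-(1/2)) * phi (x-u) ≤ phi (x-1)
      have e : Real.exp (1/2) * Real.exp (-(1/2) : ℝ) = 1 := by rw [← Real.exp_add]; norm_num
      have e' : Real.exp (1/2) * Real.exp (-(1/2):ℝ) * phi (x - u) = phi (x - u) := by
        rw [e, one_mul]
      nlinarith [mul_le_mul_of_nonneg_left this (Real.exp_pos ((1:ℝ)/2)).le]
    exact mul_le_mul hphi (lap_le u) (lap_pos u).le (mul_nonneg (Real.exp_pos _).le (phi_pos _).le)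
  have b2 : (∫ u in (Icc (-1:ℝ) 1)ᶜ, phi (x - u) * lapDen u)
      ≤ ∫ u in (Icc (-1:ℝ) 1)ᶜ, u ^ 2 * (phi (x - u) * lapDen u) := by
    refine setIntegral_mono_on (I1 x).integrableOn (I2 x).integrableOn
      measurableSet_Icc.compl ?_
    intro u hu
    simp only [mem_compl_iff, mem_Icc, not_and_or, not_le] at hu
    have hu2 : (1:ℝ) ≤ u ^ 2 := by rcases hu with h | h <;> nlinarith
    nlinarith [F1_nonneg x u]
  have b3 : (∫ u in (Icc (-1:ℝ) 1)ᶜ, u ^ 2 * (phi (x - u) * lapDen u)) ≤ Kk x :=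
    setIntegral_le_integral (I2 x)
      (Filter.Eventually.of_forall fun u => mul_nonneg (sq_nonneg u) (F1_nonneg x u))
  have : (Real.exp (1/2) * phi (x - 1) * (1/2)) * (1 - (-1)) = Real.exp (1/2) * phi (x - 1) := by
    ring
  linarith

lemma phi_even (y : ℝ) : phi (-y) = phi y := by unfold phi; rw [neg_pow]; norm_num

lemma lap_even (y : ℝ) : lapDen (-y) = lapDen y := by unfold lapDen; rw [abs_neg]

lemma K_even (x : ℝ) : Kk (-x) = Kk x := by
  unfold Kk
  rw [← integral_neg_eq_self (fun u => u ^ 2 * (phi (x - u) * lapDen u)) volume]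
  congr 1
  funext u
  have : x - -u = -(-x - u) := by ring
  rw [this, phi_even, lap_even, neg_pow]
  norm_num

lemma g_even (x : ℝ) : conv lapDen (-x) = conv lapDen x := by
  unfold conv
  rw [← integral_neg_eq_self (fun u => phi (x - u) * lapDen u) volume]
  congr 1
  funext u
  have : x - -u = -(-x - u) := by ring
  rw [this, phi_even, lap_even]

lemma key_bound (x : ℝ) :
    phi x + conv lapDen x ≤ (4 * Real.exp 4 + 1) * Kk x := by
  have main : ∀ y : ℝ, 0 ≤ y → phi y + conv lapDen y ≤ (4 * Real.exp 4 + 1) * Kk y := by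
    intro y hy
    have h1 := phi_le_K hy
    have h2 := g_le hy
    have h3 := phi1_le_K hy
    have e : Real.exp (1/2) * Real.exp (7/2) = Real.exp (4:ℝ) := by
      rw [← Real.exp_add]; norm_num
    have : Real.exp (1/2) * phi (y - 1) ≤ 2 * Real.exp 4 * Kk y := by
      have := mul_le_mul_of_nonneg_left h3 (Real.exp_pos ((1:ℝ)/2)).le
      nlinarith [K_nonneg y, Real.exp_pos ((1:ℝ)/2)]
    linarith [K_nonneg y]
  rcases le_or_gt 0 x with hx | hx
  · exact main x hx
  · have := main (-x) (by linarith)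
    rw [phi_even, g_even, K_even] at this
    exact this

lemma D_pos {α : ℝ} (hα : α ∈ Icc (0:ℝ) 1) (x : ℝ) :
    0 < (1 - α) * phi x + α * conv lapDen x := by
  obtain ⟨h0, h1⟩ := hα
  rcases lt_or_eq_of_le h1 with h | h
  · nlinarith [phi_pos x, g_nonneg x, mul_nonneg h0 (g_nonneg x)]
  · rw [← h]; nlinarith [g_pos x, phi_pos x]

lemma aWt_nonneg {α : ℝ} (hα : α ∈ Icc (0:ℝ) 1) (x : ℝ) : 0 ≤ aWt lapDen α x :=
  div_nonneg (mul_nonneg hα.1 (g_nonneg x)) (D_pos hα x).le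

lemma measurable_coordDen (α x : ℝ) : Measurable (coordDen lapDen α x) := by
  unfold coordDen
  refine Measurable.ite ?_ measurable_const ?_
  · exact measurableSet_eq
  · exact ((cont_F1 x).measurable.div_const _).const_mul _

lemma r2_eq (x : ℝ) {α : ℝ} (hα : α ∈ Icc (0:ℝ) 1) :
    r2 lapDen α 0 x = α / ((1 - α) * phi x + α * conv lapDen x) * Kk x := by
  have hDpos := D_pos hα x
  have hgpos := g_pos x
  have ha0 : 0 ≤ aWt lapDen α x := aWt_nonneg hα x
  unfold r2 coordPost
  have hmeas : Measurable fun u => (coordDen lapDen α x u).toNNReal :=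
    (measurable_coordDen α x).real_toNNReal
  have hrw : (fun u => ENNReal.ofReal (coordDen lapDen α x u))
      = fun u => ((coordDen lapDen α x u).toNNReal : ENNReal) := rfl
  rw [hrw, integral_withDensity_eq_integral_smul hmeas]
  set f : ℝ → ℝ := fun u => (coordDen lapDen α x u).toNNReal • (u - 0) ^ 2 with hf
  have hfval : ∀ u, f u = ((coordDen lapDen α x u).toNNReal : ℝ) * (u - 0) ^ 2 :=
    fun u => rfl
  have hae : ∀ᵐ u : ℝ, u ≠ 0 := by
    rw [ae_iff]
    simp only [ne_eq, not_not]
    have h0 : {u : ℝ | u = 0} = {0} := by ext; simp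
    rw [h0, Real.volume_singleton]
  have haeq : f =ᵐ[volume] fun u =>
      (aWt lapDen α x / conv lapDen x) * (u ^ 2 * (phi (x - u) * lapDen u)) := by
    filter_upwards [hae] with u hu
    rw [hfval]
    unfold coordDen
    rw [if_neg hu]
    have hnn : 0 ≤ aWt lapDen α x * (phi (x - u) * lapDen u / conv lapDen x) :=
      mul_nonneg ha0 (div_nonneg (F1_nonneg x u) hgpos.le)
    rw [Real.coe_toNNReal _ hnn]
    field_simp
    ring
  have hint : Integrable f volume := (((I2 x).const_mul _).congr haeq.symm)
  have hfm : Measurable f := by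
    have h1 : Measurable fun u : ℝ => ((coordDen lapDen α x u).toNNReal : ℝ) :=
      hmeas.coe_nnreal_real
    have h2 : f = fun u => ((coordDen lapDen α x u).toNNReal : ℝ) * (u - 0) ^ 2 :=
      funext hfval
    rw [h2]; exact h1.mul (by fun_prop)
  have hintd : Integrable f (Measure.dirac (0:ℝ)) := by
    refine ⟨hfm.aestronglyMeasurable, ?_⟩
    simp only [HasFiniteIntegral, lintegral_dirac' _ hfm.enorm]
    exact ENNReal.coe_lt_top
  rw [integral_add_measure hint hintd, integral_dirac]
  have hf0 : f 0 = 0 := by rw [hfval]; simp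
  rw [hf0, add_zero, integral_congr_ae haeq, integral_const_mul]
  unfold Kk
  congr 1
  unfold aWt
  field_simp

/-- Lemma 2: for `γ` the standard Laplace density, there
exists `C₀ > 0` such that `r₂(α, 0, x) ≥ C₀ α` for every real `x` and every
`α ∈ [0,1]`. -/
theorem laplace_r2_lower_bound :
    ∃ C0 > (0 : ℝ), ∀ x : ℝ, ∀ α ∈ Set.Icc (0 : ℝ) 1, C0 * α ≤ r2 lapDen α 0 x := by
  refine ⟨(4 * Real.exp 4 + 1)⁻¹, by positivity, ?_⟩
  intro x α hα
  have hD := D_pos hα x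
  rw [r2_eq x hα]
  have hC1 : (0:ℝ) < 4 * Real.exp 4 + 1 := by positivity
  have hDle : (1 - α) * phi x + α * conv lapDen x ≤ (4 * Real.exp 4 + 1) * Kk x := by
    nlinarith [mul_nonneg hα.1 (phi_pos x).le, mul_nonneg (sub_nonneg.mpr hα.2) (g_nonneg x),
      key_bound x]
  rw [div_mul_eq_mul_div, le_div_iff₀ hD]
  have hstep : (4 * Real.exp 4 + 1)⁻¹ * ((1 - α) * phi x + α * conv lapDen x) ≤ Kk x := by
    calc (4 * Real.exp 4 + 1)⁻¹ * ((1 - α) * phi x + α * conv lapDen x)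
        ≤ (4 * Real.exp 4 + 1)⁻¹ * ((4 * Real.exp 4 + 1) * Kk x) := by
          exact mul_le_mul_of_nonneg_left hDle (by positivity)
      _ = Kk x := by field_simp
  nlinarith [mul_le_mul_of_nonneg_left hstep hα.1]


end
end

section
/- Bound on the modified weight α_A (Cauchy slab): for A ≥ 0, set t_A = √(2(1+A)·log n) and α_A = t^{−1}(t_A). There exist N_0 > 0 and C > 0, both independent of A, such that for all n ≥ N_0, α_A ≤ C·(1+A)·(log n)·n^{−1−A}. -/
/-!
Statement 12: bound on the modified empirical Bayes weight α_A,
spike and Cauchy slab prior.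
-/

open MeasureTheory Real Set

noncomputable section

/-- `0` is a median of the single-coordinate posterior distribution. -/
def medianZero (γ : ℝ → ℝ) (α x : ℝ) : Prop :=
  2⁻¹ ≤ coordPost γ α x (Set.Iic 0) ∧ 2⁻¹ ≤ coordPost γ α x (Set.Ici 0)

/-- `t` is the posterior median threshold function. -/
def IsThreshold (γ : ℝ → ℝ) (t : ℝ → ℝ) : Prop :=
  ∀ α ∈ Set.Ioo (0 : ℝ) 1, 0 < t α ∧ ∀ x : ℝ, (medianZero γ α x ↔ |x| ≤ t α)

lemma sqrt2pi_ge : (2:ℝ) ≤ Real.sqrt (2 * Real.pi) := by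
  have h := Real.pi_gt_three
  rw [Real.le_sqrt (by norm_num) (by nlinarith)]
  nlinarith

lemma sqrt2pi_le : Real.sqrt (2 * Real.pi) ≤ 3 := by
  rw [show (3:ℝ) = Real.sqrt 9 by
    rw [show (9:ℝ) = 3^2 by norm_num, Real.sqrt_sq (by norm_num)]]
  exact Real.sqrt_le_sqrt (by nlinarith [Real.pi_le_four])

lemma sqrt2pi_pos : (0:ℝ) < Real.sqrt (2 * Real.pi) := lt_of_lt_of_le (by norm_num) sqrt2pi_ge

lemma phi_le (x : ℝ) : phi x ≤ Real.exp (-x ^ 2 / 2) / 2 := by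
  unfold phi
  exact div_le_div_of_nonneg_left (Real.exp_pos _).le (by norm_num) sqrt2pi_ge

lemma phi_le_one (x : ℝ) : phi x ≤ 1 := by
  have h : Real.exp (-x^2/2) ≤ 1 := Real.exp_le_one_iff.2 (by nlinarith [sq_nonneg x])
  nlinarith [phi_le x, Real.exp_pos (-x^2/2)]

lemma phi_anti {a b : ℝ} (ha : 0 ≤ a) (hab : a ≤ b) : phi b ≤ phi a := by
  unfold phi
  have h : Real.exp (-b^2/2) ≤ Real.exp (-a^2/2) := Real.exp_le_exp.2 (by nlinarith)
  gcongr

lemma exp_half_le_two : Real.exp ((1:ℝ)/2) ≤ 2 := by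
  nlinarith [Real.exp_one_lt_d9, Real.exp_pos ((1:ℝ)/2),
    Real.exp_add ((1:ℝ)/2) ((1:ℝ)/2), Real.exp_pos 1,
    sq_nonneg (Real.exp ((1:ℝ)/2) - 2)]

lemma phi_lb {v : ℝ} (h : |v| ≤ 1) : (1:ℝ)/6 ≤ phi v := by
  have h1 : v^2 ≤ 1 := by nlinarith [abs_nonneg v, sq_abs v, abs_le.1 h]
  have h2 : Real.exp (-(1:ℝ)/2) ≤ Real.exp (-v^2/2) := Real.exp_le_exp.2 (by linarith)
  have h3 : (1:ℝ)/2 ≤ Real.exp (-(1:ℝ)/2) := by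
    rw [show (-(1:ℝ)/2) = -(1/2) by norm_num, Real.exp_neg]
    have h5 := Real.exp_pos ((1:ℝ)/2)
    have h6 := exp_half_le_two
    nlinarith [mul_inv_cancel₀ h5.ne']
  unfold phi
  rw [le_div_iff₀ sqrt2pi_pos]
  nlinarith [sqrt2pi_le]

lemma cauchy_pos (x : ℝ) : 0 < cauchyDen x := by
  unfold cauchyDen
  have := Real.pi_pos
  positivity

lemma cauchy_integrable : Integrable cauchyDen := by
  have : cauchyDen = fun x => Real.pi⁻¹ * (1 + x^2)⁻¹ := by
    funext x; unfold cauchyDen; rw [mul_inv]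
  rw [this]
  exact integrable_inv_one_add_sq.const_mul _

lemma cauchy_integral : ∫ u, cauchyDen u = 1 := by
  have : cauchyDen = fun x => Real.pi⁻¹ * (1 + x^2)⁻¹ := by
    funext x; unfold cauchyDen; rw [mul_inv]
  rw [this, integral_const_mul, integral_univ_inv_one_add_sq,
    inv_mul_cancel₀ Real.pi_ne_zero]

lemma cauchy_anti {a b : ℝ} (ha : 0 ≤ a) (hab : a ≤ b) : cauchyDen b ≤ cauchyDen a := by
  unfold cauchyDen
  have := Real.pi_pos
  apply inv_anti₀ (by positivity)
  nlinarith [mul_le_mul_of_nonneg_left (show 1+a^2 ≤ 1+b^2 by nlinarith) Real.pi_pos.le]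

lemma phi_continuous : Continuous phi :=
  (Real.continuous_exp.comp (by continuity)).div_const _

lemma cauchy_continuous : Continuous cauchyDen := by
  unfold cauchyDen
  apply Continuous.inv₀ (by continuity)
  intro u
  have := Real.pi_pos
  positivity

lemma kernel_integrable (x : ℝ) : Integrable (fun u => phi (x - u) * cauchyDen u) := by
  apply Integrable.mono cauchy_integrable
  · exact ((phi_continuous.comp (by continuity)).mul cauchy_continuous).aestronglyMeasurable
  · filter_upwards with u
    rw [Real.norm_of_nonneg (mul_pos (phi_pos _) (cauchy_pos u)).le,
      Real.norm_of_nonneg (cauchy_pos u).le]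
    nlinarith [phi_le_one (x-u), phi_pos (x-u), cauchy_pos u]

lemma conv_pos (x : ℝ) : 0 < conv cauchyDen x := by
  unfold conv
  rw [integral_pos_iff_support_of_nonneg
    (fun u => (mul_pos (phi_pos _) (cauchy_pos u)).le) (kernel_integrable x)]
  have h : (Function.support fun u => phi (x - u) * cauchyDen u) = univ := by
    ext u
    simp only [Function.mem_support, mem_univ, iff_true]
    exact (mul_pos (phi_pos _) (cauchy_pos u)).ne'
  rw [h]
  simp

def Iminus (x : ℝ) : ℝ := ∫ u in Iic (0:ℝ), phi (x - u) * cauchyDen u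

lemma Iminus_nonneg (x : ℝ) : 0 ≤ Iminus x :=
  setIntegral_nonneg measurableSet_Iic fun u _ => (mul_pos (phi_pos _) (cauchy_pos u)).le

lemma Iminus_le_phi {x : ℝ} (hx : 0 ≤ x) : Iminus x ≤ phi x := by
  have h1 : Iminus x ≤ ∫ u in Iic (0:ℝ), phi x * cauchyDen u := by
    apply setIntegral_mono_on ((kernel_integrable x).integrableOn)
      ((cauchy_integrable.const_mul _).integrableOn) measurableSet_Iic
    intro u hu
    have : phi (x - u) ≤ phi x := phi_anti hx (by simp at hu; linarith)
    nlinarith [cauchy_pos u]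
  have h2 : ∫ u in Iic (0:ℝ), phi x * cauchyDen u = phi x * ∫ u in Iic (0:ℝ), cauchyDen u := by
    rw [integral_const_mul]
  have h3 : ∫ u in Iic (0:ℝ), cauchyDen u ≤ 1 := by
    rw [← cauchy_integral]
    exact setIntegral_le_integral cauchy_integrable
      (Filter.Eventually.of_forall fun u => (cauchy_pos u).le)
  have h0 : (0:ℝ) ≤ ∫ u in Iic (0:ℝ), cauchyDen u :=
    setIntegral_nonneg measurableSet_Iic fun u _ => (cauchy_pos u).le
  nlinarith [phi_pos x]

lemma conv_lb {x : ℝ} (hx : 1 ≤ x) :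
    (12 * (1 + (x+1)^2))⁻¹ ≤ conv cauchyDen x := by
  have hset : ∫ u in Icc (x-1) (x+1), phi (x-u) * cauchyDen u ≤ conv cauchyDen x := by
    unfold conv
    exact setIntegral_le_integral (kernel_integrable x)
      (Filter.Eventually.of_forall fun u => (mul_pos (phi_pos _) (cauchy_pos u)).le)
  have hlb : ∫ u in Icc (x-1) (x+1), (1/6 : ℝ) * cauchyDen (x+1)
      ≤ ∫ u in Icc (x-1) (x+1), phi (x-u) * cauchyDen u := by
    apply setIntegral_mono_on (integrableOn_const measure_Icc_lt_top.ne enorm_ne_top)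
      ((kernel_integrable x).integrableOn) measurableSet_Icc
    intro u hu
    obtain ⟨h1, h2⟩ := hu
    have hp : (1/6 : ℝ) ≤ phi (x - u) := phi_lb (by rw [abs_le]; constructor <;> linarith)
    have hc : cauchyDen (x+1) ≤ cauchyDen u := by
      rcases le_or_gt 0 u with h | h
      · exact cauchy_anti h (by linarith)
      · calc cauchyDen (x+1) ≤ cauchyDen (-u) := cauchy_anti (by linarith) (by linarith)
          _ = cauchyDen u := by unfold cauchyDen; ring_nf
    nlinarith [cauchy_pos (x+1), cauchy_pos u, phi_pos (x-u)]
  have hconst : ∫ u in Icc (x-1) (x+1), (1/6 : ℝ) * cauchyDen (x+1)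
      = 2 * ((1/6 : ℝ) * cauchyDen (x+1)) := by
    rw [setIntegral_const, measureReal_def, Real.volume_Icc, show x+1-(x-1) = 2 by ring]
    simp [ENNReal.toReal_ofReal]
  have hpi : cauchyDen (x+1) ≥ (4 * (1 + (x+1)^2))⁻¹ := by
    unfold cauchyDen
    apply inv_anti₀ (by positivity)
    nlinarith [Real.pi_le_four, sq_nonneg (x+1)]
  have heq : (12 * (1 + (x+1)^2))⁻¹ = 3⁻¹ * (4 * (1 + (x+1)^2))⁻¹ := by
    rw [← mul_inv]; ring_nf
  rw [ge_iff_le] at hpi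
  linarith

lemma aWt_mem {α x : ℝ} (hα : α ∈ Ioo (0:ℝ) 1) : aWt cauchyDen α x ∈ Ioo (0:ℝ) 1 := by
  obtain ⟨h0, h1⟩ := hα
  have hφ := phi_pos x
  have hg := conv_pos x
  have hden : 0 < (1 - α) * phi x + α * conv cauchyDen x := by nlinarith
  constructor
  · exact div_pos (by nlinarith) hden
  · rw [aWt, div_lt_one hden]; nlinarith

lemma coordPost_Iic {α : ℝ} (x : ℝ) (hα : α ∈ Ioo (0:ℝ) 1) :
    coordPost cauchyDen α x (Iic 0) =
      ENNReal.ofReal ((1 - aWt cauchyDen α x) +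
        aWt cauchyDen α x * (Iminus x / conv cauchyDen x)) := by
  obtain ⟨ha0, ha1⟩ := aWt_mem (x := x) hα
  set a := aWt cauchyDen α x with ha
  have hg := conv_pos x
  have hmeas : Measurable fun u => ENNReal.ofReal (coordDen cauchyDen α x u) := by
    apply Measurable.ennreal_ofReal
    unfold coordDen
    apply Measurable.ite (MeasurableSet.singleton 0 |>.congr ?_) measurable_const
    · exact ((measurable_const.mul (((phi_continuous.comp
        (continuous_const.sub continuous_id)).mul cauchy_continuous).measurable.div_const _)))
    · ext u; simp [Set.mem_singleton_iff]
  rw [coordPost, withDensity_apply _ measurableSet_Iic, Measure.restrict_add,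
    lintegral_add_measure]
  have hdirac : ∫⁻ u in Iic (0:ℝ), ENNReal.ofReal (coordDen cauchyDen α x u)
      ∂(Measure.dirac 0) = ENNReal.ofReal (1 - a) := by
    rw [setLIntegral_dirac' hmeas measurableSet_Iic]
    simp [coordDen, ha]
  have hvol : ∫⁻ u in Iic (0:ℝ), ENNReal.ofReal (coordDen cauchyDen α x u)
      ∂volume = ENNReal.ofReal (a * (Iminus x / conv cauchyDen x)) := by
    have hae : (fun u => ENNReal.ofReal (coordDen cauchyDen α x u))
        =ᵐ[volume.restrict (Iic (0:ℝ))]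
        fun u => ENNReal.ofReal ((a / conv cauchyDen x) * (phi (x - u) * cauchyDen u)) := by
      have h0 : (volume.restrict (Iic (0:ℝ))) {(0:ℝ)} = 0 := by
        rw [Measure.restrict_apply (MeasurableSet.singleton 0)]
        exact measure_mono_null (inter_subset_left) (volume_singleton)
      filter_upwards [compl_mem_ae_iff.mpr h0] with u hu
      have hu0 : u ≠ 0 := by simpa using hu
      simp only [coordDen, if_neg hu0]
      congr 1
      ring
    rw [lintegral_congr_ae hae]
    rw [← ofReal_integral_eq_lintegral_ofReal]
    · rw [integral_const_mul]
      congr 1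
      rw [← Iminus]
      ring
    · exact ((kernel_integrable x).integrableOn.const_mul _)
    · filter_upwards with u
      have := mul_pos (phi_pos (x-u)) (cauchy_pos u)
      positivity
  rw [hvol, hdirac, ← ENNReal.ofReal_add]
  · ring_nf
  · exact mul_nonneg ha0.le (div_nonneg (Iminus_nonneg x) hg.le)
  · linarith

lemma exp_cube_lb (x : ℝ) : x^6 / 216 ≤ Real.exp (x^2/2) := by
  have h1 : x^2/6 + 1 ≤ Real.exp (x^2/6) := Real.add_one_le_exp _
  have h2 : Real.exp (x^2/2) = (Real.exp (x^2/6))^3 := by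
    rw [← Real.exp_nat_mul]; norm_num; ring_nf
  have h3 : (x^2/6)^3 ≤ (x^2/6 + 1)^3 := by
    apply pow_le_pow_left₀ (by positivity) (by linarith)
  have h4 : (x^2/6 + 1)^3 ≤ (Real.exp (x^2/6))^3 := by
    apply pow_le_pow_left₀ (by positivity) h1
  calc x^6/216 = (x^2/6)^3 := by ring
    _ ≤ (Real.exp (x^2/6))^3 := le_trans h3 h4
    _ = Real.exp (x^2/2) := h2.symm

lemma phi_le_conv_third {x : ℝ} (hx : 10 ≤ x) : 3 * phi x ≤ conv cauchyDen x := by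
  have h1 := conv_lb (by linarith : (1:ℝ) ≤ x)
  have h2 := phi_le x
  have h3 := exp_cube_lb x
  have hK : (0:ℝ) < 1 + (x+1)^2 := by positivity
  have key : 3 * (Real.exp (-x^2/2)/2) ≤ (12 * (1 + (x+1)^2))⁻¹ := by
    rw [show -x^2/2 = -(x^2/2) by ring, Real.exp_neg]
    have hE := Real.exp_pos (x^2/2)
    have hq : 100 ≤ x^2 := by nlinarith
    have h4 : 100*x^2 ≤ x^4 := by nlinarith
    have h6 : 100*x^4 ≤ x^6 := by nlinarith [sq_nonneg x]
    have hx6 : 3888 * (1 + (x+1)^2) ≤ x^6 := by nlinarith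
    have h18 : 18 * (1 + (x+1)^2) ≤ Real.exp (x^2/2) := by nlinarith
    have heq : 3 * ((Real.exp (x^2/2))⁻¹/2) = (2/3 * Real.exp (x^2/2))⁻¹ := by
      field_simp
    rw [heq]
    exact inv_anti₀ (by positivity) (by nlinarith)
  have := phi_pos x
  nlinarith

set_option maxHeartbeats 1000000 in
/-- Lemma 8: bound on the modified weight `α_A`.
For `A ≥ 0`, with `t_A = √(2(1+A) log n)` and `α_A = t⁻¹(t_A)`, there exist
`N₀` and `C > 0`, independent of `A`, such that for `n ≥ N₀`,
`α_A ≤ C (1+A) (log n) n^{-1-A}`. -/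
theorem alphaA_bound :
    ∃ N0 : ℕ, ∃ C > (0 : ℝ), ∀ A : ℝ, 0 ≤ A → ∀ n : ℕ, N0 ≤ n →
      ∀ t : ℝ → ℝ, IsThreshold cauchyDen t →
      ∀ αA ∈ Set.Ioo (0 : ℝ) 1, t αA = Real.sqrt (2 * (1 + A) * Real.log n) →
        αA ≤ C * (1 + A) * Real.log n * (n : ℝ) ^ (-1 - A) := by
  refine ⟨10^22, 100, by norm_num, ?_⟩
  intro A hA n hn t hT αA hαA htαA
  have hn0 : (0:ℝ) < n := by
    have : (10:ℕ)^22 ≤ n := hn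
    have : ((10:ℕ)^22 : ℝ) ≤ (n:ℝ) := by exact_mod_cast this
    push_cast at this
    linarith [this]
  have hL : (50:ℝ) ≤ Real.log n := by
    rw [Real.le_log_iff_exp_le hn0]
    have h1 : Real.exp 50 = (Real.exp 1)^(50:ℕ) := by
      rw [← Real.exp_nat_mul]; norm_num
    have h2 : (Real.exp 1)^(50:ℕ) ≤ (2.7182818286:ℝ)^(50:ℕ) :=
      pow_le_pow_left₀ (Real.exp_pos 1).le Real.exp_one_lt_d9.le 50
    have h3 : ((10:ℕ)^22 : ℝ) ≤ (n:ℝ) := by exact_mod_cast hn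
    push_cast at h3
    calc Real.exp 50 ≤ (2.7182818286:ℝ)^(50:ℕ) := by rw [h1]; exact h2
      _ ≤ (10:ℝ)^22 := by norm_num
      _ ≤ n := h3
  set L := Real.log n with hLdef
  set x := Real.sqrt (2 * (1 + A) * L) with hxdef
  have hLA : (0:ℝ) ≤ 2 * (1 + A) * L := by nlinarith
  have hx2 : x^2 = 2 * (1 + A) * L := Real.sq_sqrt hLA
  have hx0 : 0 ≤ x := Real.sqrt_nonneg _
  have hx10 : (10:ℝ) ≤ x := by nlinarith
  obtain ⟨htpos, hiff⟩ := hT αA hαA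
  have hmed : medianZero cauchyDen αA x :=
    (hiff x).2 (by rw [htαA, abs_of_nonneg hx0])
  have hIic := hmed.1
  rw [coordPost_Iic x hαA] at hIic
  set a := aWt cauchyDen αA x with hadef
  obtain ⟨ha0, ha1⟩ := @aWt_mem αA x hαA
  rw [← hadef] at ha0 ha1
  have hg := conv_pos x
  have hr0 : 0 ≤ Iminus x / conv cauchyDen x :=
    div_nonneg (Iminus_nonneg x) hg.le
  have hreal : (2:ℝ)⁻¹ ≤ (1 - a) + a * (Iminus x / conv cauchyDen x) := by
    have h2 : (2⁻¹ : ENNReal) = ENNReal.ofReal (2⁻¹ : ℝ) := by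
      rw [ENNReal.ofReal_inv_of_pos (by norm_num)]
      norm_num
    rw [h2, ENNReal.ofReal_le_ofReal_iff (by nlinarith)] at hIic
    exact hIic
  have hr3 : Iminus x / conv cauchyDen x ≤ 1/3 := by
    rw [div_le_iff₀ hg]
    have := Iminus_le_phi hx0
    have := phi_le_conv_third hx10
    linarith
  have ha34 : a ≤ 3/4 := by nlinarith
  -- extract α bound
  have hφ := phi_pos x
  have hD : 0 < (1 - αA) * phi x + αA * conv cauchyDen x := by
    obtain ⟨h0, h1⟩ := hαA
    nlinarith
  have hαg : αA * conv cauchyDen x ≤ 3 * phi x := by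
    rw [hadef, aWt, div_le_iff₀ hD] at ha34
    obtain ⟨h0, h1⟩ := hαA
    nlinarith
  have hK : (0:ℝ) < 1 + (x+1)^2 := by positivity
  have hconv := conv_lb (by linarith : (1:ℝ) ≤ x)
  have hαbound : αA ≤ 36 * (1 + (x+1)^2) * phi x := by
    have h1 : αA * (12 * (1 + (x+1)^2))⁻¹ ≤ αA * conv cauchyDen x := by
      apply mul_le_mul_of_nonneg_left hconv (hαA.1.le)
    have h2 : αA * (12 * (1 + (x+1)^2))⁻¹ ≤ 3 * phi x := le_trans h1 hαg
    rw [← le_div_iff₀ (by positivity)] at h2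
    calc αA ≤ 3 * phi x / (12 * (1 + (x+1)^2))⁻¹ := h2
      _ = 36 * (1 + (x+1)^2) * phi x := by
          rw [div_eq_mul_inv, inv_inv]; ring
  have hE : Real.exp (-x^2/2) = (n:ℝ)^(-1-A) := by
    rw [Real.rpow_def_of_pos hn0]
    congr 1
    rw [hx2]; ring
  have hEpos : (0:ℝ) < (n:ℝ)^(-1-A) := Real.rpow_pos_of_pos hn0 _
  have hKle : 1 + (x+1)^2 ≤ 4 * (1 + A) * L := by nlinarith
  have hphix : phi x ≤ (n:ℝ)^(-1-A) / 2 := by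
    have := phi_le x
    rw [hE] at this
    exact this
  calc αA ≤ 36 * (1 + (x+1)^2) * phi x := hαbound
    _ ≤ 36 * (4 * (1 + A) * L) * ((n:ℝ)^(-1-A) / 2) := by
        apply mul_le_mul (by nlinarith) hphix (phi_pos x).le (by nlinarith)
    _ = 72 * ((1 + A) * L * (n:ℝ)^(-1-A)) := by ring
    _ ≤ 100 * (1 + A) * L * (n:ℝ)^(-1-A) := by
        have hpos : 0 ≤ (1 + A) * L * (n:ℝ)^(-1-A) := by
          apply mul_nonneg (mul_nonneg (by linarith) (by linarith)) hEpos.le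
        nlinarith

end
end

section
/- Properties of the Laplace-convolved spike g_0: the function g_0 = φ * γ_0 satisfies g_0'' = λ_0²·(g_0 − φ) on ℝ; moreover, for n large enough, 1/g_0(x) ≤ 2/φ(x) for all real x, and |g_0(x) − φ(x)| ≤ 1/λ_0² for all real x. -/
/-!
Statement 15: properties of the Laplace-convolved spike g₀.
-/

open MeasureTheory Real Set

noncomputable section

/-- Spike inverse-scale `λ₀ = 5√(2π) n`. -/
def lam0 (n : ℕ) : ℝ := 5 * Real.sqrt (2 * Real.pi) * n

/-- Slab scale parameter `λ₁ = 0.05`. -/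
def lam1 : ℝ := 0.05

/-- Spike density: Laplace with parameter `λ₀`. -/
def gamma0 (n : ℕ) (x : ℝ) : ℝ := lam0 n / 2 * Real.exp (-(lam0 n) * |x|)

/-- Slab density: Cauchy with scale `1/λ₁`. -/
def gamma1 (x : ℝ) : ℝ := lam1 / Real.pi * (1 + lam1 ^ 2 * x ^ 2)⁻¹

/-- `g₀ = φ * γ₀`. -/
def g0 (n : ℕ) (x : ℝ) : ℝ := ∫ u, phi (x - u) * gamma0 n u

/-- `g₁ = φ * γ₁`. -/
def g1 (x : ℝ) : ℝ := ∫ u, phi (x - u) * gamma1 u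

/-- `β(x) = g₁(x)/g₀(x) - 1` for the SSL prior. -/
def betaSSL (n : ℕ) (x : ℝ) : ℝ := g1 x / g0 n x - 1

namespace G0Aux

/-! ### Basic facts about `phi` -/

lemma sqrt2pi_pos : 0 < Real.sqrt (2 * Real.pi) := Real.sqrt_pos.2 (by positivity)

lemma phi_def (x : ℝ) : phi x = (Real.sqrt (2 * Real.pi))⁻¹ * Real.exp (-(1/2 : ℝ) * x ^ 2) := by
  rw [phi, div_eq_inv_mul]
  congr 2
  ring

lemma phi_pos (x : ℝ) : 0 < phi x := by
  rw [phi_def]; positivity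

lemma phi_nonneg (x : ℝ) : 0 ≤ phi x := (phi_pos x).le

lemma phi_even (x : ℝ) : phi (-x) = phi x := by
  rw [phi, phi, neg_sq]

lemma phi_cont : Continuous phi := by
  unfold phi
  fun_prop

lemma integrable_phi : Integrable phi := by
  have h : phi = fun x => (Real.sqrt (2 * Real.pi))⁻¹ * Real.exp (-(1/2 : ℝ) * x ^ 2) :=
    funext phi_def
  rw [h]
  exact (integrable_exp_neg_mul_sq (by norm_num)).const_mul _

lemma integral_phi : ∫ x, phi x = 1 := by
  have h : phi = fun x => (Real.sqrt (2 * Real.pi))⁻¹ * Real.exp (-(1/2 : ℝ) * x ^ 2) :=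
    funext phi_def
  rw [h, integral_const_mul, integral_gaussian]
  rw [show (Real.pi / (1/2 : ℝ)) = 2 * Real.pi by ring]
  exact inv_mul_cancel₀ (ne_of_gt sqrt2pi_pos)

lemma hasDerivAt_phi (x : ℝ) : HasDerivAt phi (-x * phi x) x := by
  have h : HasDerivAt (fun y : ℝ => -(1/2 : ℝ) * y ^ 2) (-x) x := by
    have := (hasDerivAt_pow 2 x).const_mul (-(1/2 : ℝ))
    refine this.congr_deriv ?_
    push_cast
    ring
  have h2 := (h.exp).const_mul (Real.sqrt (2 * Real.pi))⁻¹
  have hphi : phi = fun y => (Real.sqrt (2 * Real.pi))⁻¹ * Real.exp (-(1/2 : ℝ) * y ^ 2) :=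
    funext phi_def
  have hval : -x * phi x
      = (Real.sqrt (2 * Real.pi))⁻¹ * (Real.exp (-(1/2 : ℝ) * x ^ 2) * -x) := by
    rw [phi_def]
    ring
  rw [hval, hphi]
  exact h2

lemma phi_anti {a b : ℝ} (ha : 0 ≤ a) (hab : a ≤ b) : phi b ≤ phi a := by
  rw [phi, phi]
  gcongr

lemma phi_snd_bound (x : ℝ) : |(x ^ 2 - 1) * phi x| ≤ (Real.sqrt (2 * Real.pi))⁻¹ := by
  have key : |x ^ 2 - 1| * Real.exp (-x ^ 2 / 2) ≤ 1 := by
    rcases abs_cases (x ^ 2 - 1) with ⟨h1, h2⟩ | ⟨h1, h2⟩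
    · -- 1 ≤ x²
      set w := x ^ 2 - 1 with hw
      have hw0 : 0 ≤ w := h2
      have hq : (w + 1) / 6 + 1 ≤ Real.exp ((w + 1) / 6) := by
        have := Real.add_one_le_exp ((w + 1) / 6)
        linarith
      have hcube : w ≤ Real.exp ((w + 1) / 6) ^ 3 := by
        have h3 : ((w + 1) / 6 + 1) ^ 3 ≤ Real.exp ((w + 1) / 6) ^ 3 :=
          pow_le_pow_left₀ (by positivity) hq 3
        nlinarith [sq_nonneg (w - 3/2), sq_nonneg w, hw0]
      have hexp3 : Real.exp ((w + 1) / 6) ^ 3 = Real.exp ((w + 1) / 2) := by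
        rw [← Real.exp_nat_mul]
        congr 1
        ring
      have hwle : w ≤ Real.exp ((w + 1) / 2) := hexp3 ▸ hcube
      have hx2 : -x ^ 2 / 2 = -((w + 1) / 2) := by rw [hw]; ring
      rw [h1, hx2, Real.exp_neg]
      rw [mul_inv_le_iff₀ (Real.exp_pos _)]
      simpa using hwle
    · -- x² < 1
      have hle1 : |x ^ 2 - 1| ≤ 1 := by rw [h1]; nlinarith [sq_nonneg x]
      have hexp : Real.exp (-x ^ 2 / 2) ≤ 1 := by
        rw [show (1:ℝ) = Real.exp 0 by rw [Real.exp_zero]]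
        exact Real.exp_le_exp.2 (by nlinarith [sq_nonneg x])
      calc |x ^ 2 - 1| * Real.exp (-x ^ 2 / 2) ≤ 1 * 1 :=
            mul_le_mul hle1 hexp (Real.exp_pos _).le zero_le_one
        _ = 1 := one_mul 1
  calc |(x ^ 2 - 1) * phi x| = (|x ^ 2 - 1| * Real.exp (-x ^ 2 / 2)) * (Real.sqrt (2 * Real.pi))⁻¹ := by
        rw [abs_mul, abs_of_nonneg (phi_nonneg x), phi, div_eq_mul_inv]; ring
    _ ≤ 1 * (Real.sqrt (2 * Real.pi))⁻¹ := by
        apply mul_le_mul_of_nonneg_right key (by positivity)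
    _ = (Real.sqrt (2 * Real.pi))⁻¹ := one_mul _

lemma tendsto_phi_atTop : Filter.Tendsto phi Filter.atTop (nhds 0) := by
  have h1 : Filter.Tendsto (fun x : ℝ => -x ^ 2 / 2) Filter.atTop Filter.atBot := by
    apply Filter.Tendsto.atBot_div_const (by norm_num : (0:ℝ) < 2)
    exact Filter.tendsto_neg_atBot_iff.2 (Filter.tendsto_pow_atTop two_ne_zero)
  have h2 := Real.tendsto_exp_atBot.comp h1
  have h3 := h2.div_const (Real.sqrt (2 * Real.pi))
  have hphi : phi = fun x => Real.exp (-x ^ 2 / 2) / Real.sqrt (2 * Real.pi) := rfl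
  rw [hphi]
  simpa [Function.comp_def] using h3

/-! ### The upper tail `Psi` -/

/-- Upper tail of the standard normal. -/
def Psi (t : ℝ) : ℝ := ∫ u in Ici t, phi u

lemma Psi_nonneg (t : ℝ) : 0 ≤ Psi t :=
  setIntegral_nonneg measurableSet_Ici fun u _ => phi_nonneg u

lemma Psi_anti {s t : ℝ} (h : s ≤ t) : Psi t ≤ Psi s :=
  setIntegral_mono_set integrable_phi.integrableOn (ae_of_all _ phi_nonneg)
    (HasSubset.Subset.eventuallyLE (Ici_subset_Ici.2 h))

lemma integral_Iic_phi (c : ℝ) : ∫ u in Iic c, phi u = 1 - Psi c := by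
  have h := intervalIntegral.integral_Iic_add_Ioi (b := c) (f := phi) (μ := volume)
    integrable_phi.integrableOn integrable_phi.integrableOn
  rw [integral_phi] at h
  rw [Psi, integral_Ici_eq_integral_Ioi]
  linarith

lemma Psi_zero : Psi 0 = 1/2 := by
  have h := integral_comp_neg_Iic (0 : ℝ) phi
  simp only [phi_even, neg_zero] at h
  have h2 := integral_Iic_phi 0
  have h3 : Psi 0 = ∫ x in Ioi (0:ℝ), phi x := by
    rw [Psi, integral_Ici_eq_integral_Ioi]
  linarith

lemma Psi_eq_sub (t : ℝ) :
    Psi t = (1 - ∫ u in Iic (0:ℝ), phi u) - ∫ u in (0:ℝ)..t, phi u := by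
  have h := intervalIntegral.integral_Iic_sub_Iic (μ := volume) (f := phi) (a := (0:ℝ)) (b := t)
    integrable_phi.integrableOn integrable_phi.integrableOn
  have h2 := integral_Iic_phi t
  linarith

lemma hasDerivAt_Psi (t : ℝ) : HasDerivAt Psi (-phi t) t := by
  have h : HasDerivAt (fun u => ∫ x in (0:ℝ)..u, phi x) (phi t) t := by
    apply intervalIntegral.integral_hasDerivAt_right
      (phi_cont.intervalIntegrable _ _) _ phi_cont.continuousAt
    exact phi_cont.stronglyMeasurableAtFilter _ _
  have hP : Psi = fun u => (1 - ∫ v in Iic (0:ℝ), phi v) - ∫ x in (0:ℝ)..u, phi x :=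
    funext Psi_eq_sub
  rw [hP]
  exact ((hasDerivAt_const t (1 - ∫ v in Iic (0:ℝ), phi v)).sub h).congr_deriv (by simp)

lemma Psi_rect {t : ℝ} (ht : 0 ≤ t) : phi (t + 1) ≤ Psi t := by
  have h1 : ∫ u in Icc t (t + 1), phi u ≤ Psi t := by
    apply setIntegral_mono_set integrable_phi.integrableOn (ae_of_all _ phi_nonneg)
    exact HasSubset.Subset.eventuallyLE Icc_subset_Ici_self
  refine le_trans ?_ h1
  have h2 := setIntegral_ge_of_const_le (μ := volume) (s := Icc t (t + 1)) (c := phi (t + 1))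
    measurableSet_Icc (by simp)
    (fun x hx => phi_anti (ht.trans hx.1) hx.2) integrable_phi.integrableOn
  simpa [Real.volume_Icc] using h2

/-- Mills-type lower bound for the Gaussian tail. -/
lemma mills (t : ℝ) : t / (1 + t ^ 2) * phi t ≤ Psi t := by
  have hderiv : ∀ s : ℝ,
      HasDerivAt (fun s => Psi s - s / (1 + s ^ 2) * phi s) (-(2 * phi s / (1 + s ^ 2) ^ 2)) s := by
    intro s
    have hden : (1 + s ^ 2) ≠ 0 := by positivity
    have h1 : HasDerivAt (fun s : ℝ => s / (1 + s ^ 2))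
        ((1 * (1 + s ^ 2) - s * (2 * s)) / (1 + s ^ 2) ^ 2) s := by
      have hpow : HasDerivAt (fun s : ℝ => 1 + s ^ 2) (2 * s) s := by
        have := (hasDerivAt_pow 2 s).const_add (1 : ℝ)
        refine this.congr_deriv ?_
        push_cast
        ring
      exact (hasDerivAt_id s).div hpow hden
    have h2 := h1.mul (hasDerivAt_phi s)
    have h3 := (hasDerivAt_Psi s).sub h2
    refine h3.congr_deriv ?_
    field_simp
    ring
  have hanti : Antitone (fun s => Psi s - s / (1 + s ^ 2) * phi s) := by
    apply antitone_of_deriv_nonpos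
    · exact fun s => (hderiv s).differentiableAt
    · intro s
      rw [(hderiv s).deriv]
      have hp := phi_pos s
      have : 0 ≤ 2 * phi s / (1 + s ^ 2) ^ 2 :=
        div_nonneg (by linarith) (by positivity)
      linarith
  have htend : Filter.Tendsto (fun T : ℝ => -phi T) Filter.atTop (nhds 0) := by
    simpa using tendsto_phi_atTop.neg
  have hineq : ∀ᶠ T in Filter.atTop, -phi T ≤ Psi t - t / (1 + t ^ 2) * phi t := by
    filter_upwards [Filter.eventually_ge_atTop t] with T hT
    have h1 : Psi T - T / (1 + T ^ 2) * phi T ≤ Psi t - t / (1 + t ^ 2) * phi t := hanti hT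
    have h2 : T / (1 + T ^ 2) * phi T ≤ phi T := by
      have hb : T / (1 + T ^ 2) ≤ 1 := by
        rw [div_le_one (by positivity)]
        nlinarith [sq_nonneg (T - 1)]
      nlinarith [phi_nonneg T]
    have h3 := Psi_nonneg T
    linarith
  have := le_of_tendsto htend hineq
  linarith

/-! ### Integral helpers -/

lemma integral_Ici_shift (f : ℝ → ℝ) (a c : ℝ) :
    ∫ u in Ici a, f (u - c) = ∫ u in Ici (a - c), f u := by
  have A : MeasurableEmbedding (fun x : ℝ => x + -c) :=
    (Homeomorph.addRight (-c)).measurableEmbedding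
  have B := A.setIntegral_map (μ := volume) f (Ici (a - c))
  rw [map_add_right_eq_self volume (-c)] at B
  have hpre : (fun x : ℝ => x + -c) ⁻¹' (Ici (a - c)) = Ici a := by
    ext x
    simp only [mem_preimage, mem_Ici]
    constructor <;> intro h <;> linarith
  rw [B, hpre]
  simp_rw [← sub_eq_add_neg]

lemma integrableOn_Iic_reflect {g : ℝ → ℝ} (h : IntegrableOn (fun u => g (-u)) (Ici (0:ℝ))) :
    IntegrableOn g (Iic (0:ℝ)) := by
  rw [show (volume : Measure ℝ) = Measure.map Neg.neg volume from
    (Measure.map_neg_eq_self (volume : Measure ℝ)).symm]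
  have m : MeasurableEmbedding fun x : ℝ => -x := (Homeomorph.neg ℝ).measurableEmbedding
  rw [m.integrableOn_map_iff]
  simpa [Function.comp_def, neg_preimage, neg_Iic, neg_zero] using h

lemma integral_Iic_reflect (g : ℝ → ℝ) :
    ∫ u in Iic (0:ℝ), g u = ∫ u in Ioi (0:ℝ), g (-u) := by
  have h := integral_comp_neg_Iic (0 : ℝ) (fun u => g (-u))
  simp only [neg_neg, neg_zero] at h
  exact h

lemma integrable_even {g : ℝ → ℝ} (he : ∀ u, g (-u) = g u)
    (h : IntegrableOn g (Ioi (0:ℝ))) : Integrable g := by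
  have hIci : IntegrableOn g (Ici (0:ℝ)) := (integrableOn_Ici_iff_integrableOn_Ioi (by simp)).2 h
  have hIic : IntegrableOn g (Iic (0:ℝ)) := by
    apply integrableOn_Iic_reflect
    simpa [he] using hIci
  rw [← integrableOn_univ, ← Iic_union_Ioi (a := (0:ℝ))]
  exact hIic.union h

lemma integral_exp_Ioi {b : ℝ} (hb : 0 < b) :
    ∫ u in Ioi (0:ℝ), Real.exp (-(b * u)) = 1 / b := by
  have hd : ∀ u ∈ Ioi (0:ℝ),
      HasDerivAt (fun v => -(1/b) * Real.exp (-(b * v))) (Real.exp (-(b * u))) u := by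
    intro u _
    have h1 : HasDerivAt (fun v : ℝ => -(b * v)) (-b) u := by
      exact ((hasDerivAt_id u).const_mul b).neg.congr_deriv (by ring)
    have := (h1.exp).const_mul (-(1/b))
    refine this.congr_deriv ?_
    field_simp
  have hint : IntegrableOn (fun u => Real.exp (-(b * u))) (Ioi (0:ℝ)) := by
    have := exp_neg_integrableOn_Ioi 0 hb
    simpa [neg_mul] using this
  have htend : Filter.Tendsto (fun v => -(1/b) * Real.exp (-(b * v))) Filter.atTop (nhds 0) := by
    have h2 : Filter.Tendsto (fun v : ℝ => b * v) Filter.atTop Filter.atTop :=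
      Filter.Tendsto.const_mul_atTop hb Filter.tendsto_id
    have h3 := Real.tendsto_exp_neg_atTop_nhds_zero.comp h2
    have h4 := h3.const_mul (-(1/b))
    simpa [Function.comp_def] using h4
  have hcont : ContinuousWithinAt (fun v => -(1/b) * Real.exp (-(b * v))) (Ici 0) 0 := by
    apply Continuous.continuousWithinAt
    fun_prop
  have := integral_Ioi_of_hasDerivAt_of_tendsto hcont hd hint htend
  rw [this]
  simp

/-! ### gamma0 basics -/

lemma gamma0_eq (n : ℕ) (u : ℝ) :
    gamma0 n u = lam0 n / 2 * Real.exp (-(lam0 n * |u|)) := by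
  rw [gamma0, neg_mul]

lemma lam0_nonneg (n : ℕ) : 0 ≤ lam0 n := by
  rw [lam0]
  positivity

lemma gamma0_nonneg (n : ℕ) (u : ℝ) : 0 ≤ gamma0 n u := by
  rw [gamma0_eq]
  have := lam0_nonneg n
  positivity

lemma gamma0_even (n : ℕ) (u : ℝ) : gamma0 n (-u) = gamma0 n u := by
  rw [gamma0, gamma0, abs_neg]

lemma gamma0_le (n : ℕ) (u : ℝ) : gamma0 n u ≤ lam0 n / 2 := by
  rw [gamma0_eq]
  have h1 : Real.exp (-(lam0 n * |u|)) ≤ 1 := by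
    rw [show (1:ℝ) = Real.exp 0 by rw [Real.exp_zero]]
    apply Real.exp_le_exp.2
    have := lam0_nonneg n
    have := abs_nonneg u
    nlinarith
  have := lam0_nonneg n
  nlinarith

lemma lam0_pos {n : ℕ} (hn : 1 ≤ n) : 0 < lam0 n := by
  rw [lam0]
  have h1 : (0:ℝ) < (n:ℝ) := by exact_mod_cast hn
  positivity

lemma lam0_ge {n : ℕ} (hn : 1 ≤ n) : 12 ≤ lam0 n := by
  rw [lam0]
  have h1 : (1:ℝ) ≤ (n:ℝ) := by exact_mod_cast hn
  have h2 : (2.5:ℝ) ≤ Real.sqrt (2 * Real.pi) := by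
    apply Real.le_sqrt_of_sq_le
    nlinarith [Real.pi_gt_d6]
  nlinarith [sqrt2pi_pos]

lemma integrable_phi_sub (x : ℝ) : Integrable fun u => phi (x - u) := by
  have h : (fun u => phi (x - u)) = fun u => phi (u - x) := by
    funext u
    rw [← phi_even (x - u), neg_sub]
  rw [h]
  exact integrable_phi.comp_sub_right x

lemma cont_conv (n : ℕ) (x : ℝ) : Continuous (fun u => phi (x - u) * gamma0 n u) := by
  unfold phi gamma0
  fun_prop

lemma integrable_conv (n : ℕ) (x : ℝ) : Integrable (fun u => phi (x - u) * gamma0 n u) := by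
  apply Integrable.mono' ((integrable_phi_sub x).const_mul (lam0 n / 2))
    (cont_conv n x).aestronglyMeasurable
  refine ae_of_all _ fun u => ?_
  rw [Real.norm_eq_abs, abs_mul, abs_of_nonneg (phi_nonneg _), abs_of_nonneg (gamma0_nonneg _ _)]
  calc phi (x - u) * gamma0 n u ≤ phi (x - u) * (lam0 n / 2) :=
        mul_le_mul_of_nonneg_left (gamma0_le n u) (phi_nonneg _)
    _ = lam0 n / 2 * phi (x - u) := by ring

/-! ### Closed form for g0 -/

lemma half (l : ℝ) (y : ℝ) :
    ∫ u in Ioi (0:ℝ), phi (y - u) * (l / 2 * Real.exp (-(l * u)))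
      = l / 2 * Real.exp (l ^ 2 / 2 - l * y) * Psi (l - y) := by
  have key : ∀ u ∈ Ici (0:ℝ), phi (y - u) * (l / 2 * Real.exp (-(l * u)))
      = (l / 2 * Real.exp (l ^ 2 / 2 - l * y)) * phi (u - (y - l)) := by
    intro u _
    have e1 : Real.exp (-(y - u) ^ 2 / 2) * Real.exp (-(l * u))
        = Real.exp (l ^ 2 / 2 - l * y) * Real.exp (-(u - (y - l)) ^ 2 / 2) := by
      rw [← Real.exp_add, ← Real.exp_add]
      congr 1
      ring
    rw [phi, phi]
    calc Real.exp (-(y - u) ^ 2 / 2) / Real.sqrt (2 * Real.pi) * (l / 2 * Real.exp (-(l * u)))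
        = l / 2 * (Real.exp (-(y - u) ^ 2 / 2) * Real.exp (-(l * u))) / Real.sqrt (2 * Real.pi) := by
          ring
      _ = l / 2 * (Real.exp (l ^ 2 / 2 - l * y) * Real.exp (-(u - (y - l)) ^ 2 / 2))
            / Real.sqrt (2 * Real.pi) := by rw [e1]
      _ = (l / 2 * Real.exp (l ^ 2 / 2 - l * y))
            * (Real.exp (-(u - (y - l)) ^ 2 / 2) / Real.sqrt (2 * Real.pi)) := by ring
  rw [← integral_Ici_eq_integral_Ioi, setIntegral_congr_fun measurableSet_Ici key,
    integral_const_mul, integral_Ici_shift phi 0 (y - l),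
    show (0:ℝ) - (y - l) = l - y by ring]
  rfl

lemma closed_form (n : ℕ) (x : ℝ) :
    g0 n x = lam0 n / 2 * Real.exp (lam0 n ^ 2 / 2) *
      (Real.exp (-(lam0 n * x)) * Psi (lam0 n - x)
        + Real.exp (lam0 n * x) * Psi (lam0 n + x)) := by
  have hIic : IntegrableOn (fun u => phi (x - u) * gamma0 n u) (Iic (0:ℝ)) :=
    (integrable_conv n x).integrableOn
  have hIoi : IntegrableOn (fun u => phi (x - u) * gamma0 n u) (Ioi (0:ℝ)) :=
    (integrable_conv n x).integrableOn
  rw [g0, ← intervalIntegral.integral_Iic_add_Ioi hIic hIoi]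
  have hpos : ∫ u in Ioi (0:ℝ), phi (x - u) * gamma0 n u
      = lam0 n / 2 * Real.exp (lam0 n ^ 2 / 2 - lam0 n * x) * Psi (lam0 n - x) := by
    rw [← half (lam0 n) x]
    refine setIntegral_congr_fun measurableSet_Ioi fun u hu => ?_
    rw [gamma0_eq, abs_of_nonneg (le_of_lt hu)]
  have hneg : ∫ u in Iic (0:ℝ), phi (x - u) * gamma0 n u
      = lam0 n / 2 * Real.exp (lam0 n ^ 2 / 2 + lam0 n * x) * Psi (lam0 n + x) := by
    rw [integral_Iic_reflect]
    have hcong : ∀ u ∈ Ioi (0:ℝ),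
        phi (x - -u) * gamma0 n (-u) = phi (-x - u) * (lam0 n / 2 * Real.exp (-(lam0 n * u))) := by
      intro u hu
      rw [gamma0_even, gamma0_eq, abs_of_nonneg (le_of_lt hu),
        show x - -u = -(-x - u) by ring, phi_even]
    rw [setIntegral_congr_fun measurableSet_Ioi hcong, half (lam0 n) (-x),
      show lam0 n - -x = lam0 n + x by ring,
      show lam0 n ^ 2 / 2 - lam0 n * -x = lam0 n ^ 2 / 2 + lam0 n * x by ring]
  rw [hpos, hneg,
    show lam0 n ^ 2 / 2 - lam0 n * x = lam0 n ^ 2 / 2 + -(lam0 n * x) by ring,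
    Real.exp_add, Real.exp_add]
  ring

/-! ### The ODE g0'' = l² (g0 - phi) -/

lemma key1 (l x : ℝ) :
    Real.exp (-(l * x)) * phi (l - x) = Real.exp (l * x) * phi (l + x) := by
  rw [phi, phi]
  calc Real.exp (-(l * x)) * (Real.exp (-(l - x) ^ 2 / 2) / Real.sqrt (2 * Real.pi))
      = Real.exp (-(l * x) + -(l - x) ^ 2 / 2) / Real.sqrt (2 * Real.pi) := by
        rw [Real.exp_add]; ring
    _ = Real.exp (l * x + -(l + x) ^ 2 / 2) / Real.sqrt (2 * Real.pi) := by
        congr 1; ring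
    _ = Real.exp (l * x) * (Real.exp (-(l + x) ^ 2 / 2) / Real.sqrt (2 * Real.pi)) := by
        rw [Real.exp_add]; ring

lemma key2 (l x : ℝ) :
    Real.exp (l ^ 2 / 2) * (Real.exp (-(l * x)) * phi (l - x)) = phi x := by
  rw [phi, phi]
  calc Real.exp (l ^ 2 / 2) * (Real.exp (-(l * x)) * (Real.exp (-(l - x) ^ 2 / 2) / Real.sqrt (2 * Real.pi)))
      = Real.exp (l ^ 2 / 2 + (-(l * x) + -(l - x) ^ 2 / 2)) / Real.sqrt (2 * Real.pi) := by
        rw [Real.exp_add, Real.exp_add]; ring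
    _ = Real.exp (-x ^ 2 / 2) / Real.sqrt (2 * Real.pi) := by congr 1; ring

lemma hasDerivAt_A (l : ℝ) (x : ℝ) :
    HasDerivAt (fun y => Real.exp (-(l * y)) * Psi (l - y))
      (-l * Real.exp (-(l * x)) * Psi (l - x) + Real.exp (-(l * x)) * phi (l - x)) x := by
  have e1 : HasDerivAt (fun y : ℝ => Real.exp (-(l * y))) (-l * Real.exp (-(l * x))) x := by
    have h1 : HasDerivAt (fun y : ℝ => -(l * y)) (-l) x := by
      exact ((hasDerivAt_id x).const_mul l).neg.congr_deriv (by ring)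
    have := h1.exp
    refine this.congr_deriv ?_
    ring
  have p1 : HasDerivAt (fun y : ℝ => Psi (l - y)) (phi (l - x)) x := by
    have hinner : HasDerivAt (fun y : ℝ => l - y) (-1) x := by
      simpa using (hasDerivAt_id x).const_sub l
    have := (hasDerivAt_Psi (l - x)).comp x hinner
    exact this.congr_deriv (by ring)
  exact e1.mul p1

lemma hasDerivAt_B (l : ℝ) (x : ℝ) :
    HasDerivAt (fun y => Real.exp (l * y) * Psi (l + y))
      (l * Real.exp (l * x) * Psi (l + x) - Real.exp (l * x) * phi (l + x)) x := by
  have e1 : HasDerivAt (fun y : ℝ => Real.exp (l * y)) (l * Real.exp (l * x)) x := by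
    have h1 : HasDerivAt (fun y : ℝ => l * y) l x := by
      simpa using (hasDerivAt_id x).const_mul l
    have := h1.exp
    refine this.congr_deriv ?_
    ring
  have p1 : HasDerivAt (fun y : ℝ => Psi (l + y)) (-phi (l + x)) x := by
    have hinner : HasDerivAt (fun y : ℝ => l + y) 1 x := by
      simpa using (hasDerivAt_id x).const_add l
    have := (hasDerivAt_Psi (l + x)).comp x hinner
    refine this.congr_deriv ?_
    ring
  have := e1.mul p1
  refine this.congr_deriv ?_
  ring

lemma hasDerivAt_g0 (n : ℕ) (x : ℝ) :
    HasDerivAt (g0 n)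
      (lam0 n / 2 * Real.exp (lam0 n ^ 2 / 2) *
        (lam0 n * (Real.exp (lam0 n * x) * Psi (lam0 n + x))
          - lam0 n * (Real.exp (-(lam0 n * x)) * Psi (lam0 n - x)))) x := by
  set l := lam0 n with hl
  have hg : g0 n = fun y => l / 2 * Real.exp (l ^ 2 / 2) *
      (Real.exp (-(l * y)) * Psi (l - y) + Real.exp (l * y) * Psi (l + y)) :=
    funext (closed_form n)
  rw [hg]
  have h := ((hasDerivAt_A l x).add (hasDerivAt_B l x)).const_mul
    (l / 2 * Real.exp (l ^ 2 / 2))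
  refine h.congr_deriv ?_
  have k := key1 l x
  linear_combination (l / 2 * Real.exp (l ^ 2 / 2)) * k

lemma deriv_g0_eq (n : ℕ) :
    deriv (g0 n) = fun x => lam0 n / 2 * Real.exp (lam0 n ^ 2 / 2) *
      (lam0 n * (Real.exp (lam0 n * x) * Psi (lam0 n + x))
        - lam0 n * (Real.exp (-(lam0 n * x)) * Psi (lam0 n - x))) :=
  funext fun x => (hasDerivAt_g0 n x).deriv

lemma ode (n : ℕ) (x : ℝ) :
    deriv (deriv (g0 n)) x = lam0 n ^ 2 * (g0 n x - phi x) := by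
  set l := lam0 n with hl
  rw [deriv_g0_eq n]
  have h2 : HasDerivAt (fun y => l / 2 * Real.exp (l ^ 2 / 2) *
      (l * (Real.exp (l * y) * Psi (l + y)) - l * (Real.exp (-(l * y)) * Psi (l - y))))
      (l / 2 * Real.exp (l ^ 2 / 2) *
        (l * (l * Real.exp (l * x) * Psi (l + x) - Real.exp (l * x) * phi (l + x))
          - l * (-l * Real.exp (-(l * x)) * Psi (l - x) + Real.exp (-(l * x)) * phi (l - x)))) x := by
    have hB := (hasDerivAt_B l x).const_mul l
    have hA := (hasDerivAt_A l x).const_mul l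
    have := (hB.sub hA).const_mul (l / 2 * Real.exp (l ^ 2 / 2))
    exact this
  rw [h2.deriv, closed_form n x, ← hl]
  have k1 := key1 l x
  have k2 := key2 l x
  linear_combination (l ^ 2 / 2 * Real.exp (l ^ 2 / 2)) * k1 - l ^ 2 * k2

/-! ### Lower bound: g0 ≥ phi/2 -/

lemma exp_three_half_le : Real.exp (3/2 : ℝ) ≤ 12 := by
  have h1 : Real.exp 1 ≤ 2.7182818286 := Real.exp_one_lt_d9.le
  have h2 : Real.exp (3/2 : ℝ) ^ 2 = Real.exp 3 := by
    rw [← Real.exp_nat_mul]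
    norm_num
  have h3 : Real.exp 3 = Real.exp 1 ^ 3 := by
    rw [← Real.exp_nat_mul]
    norm_num
  have h4 : Real.exp (3/2 : ℝ) ^ 2 ≤ 144 := by
    rw [h2, h3]
    have h5 : Real.exp 1 ^ 3 ≤ 2.7182818286 ^ 3 :=
      pow_le_pow_left₀ (Real.exp_pos 1).le h1 3
    nlinarith [h5]
  nlinarith [Real.exp_pos (3/2 : ℝ)]

lemma K_low_small {s : ℝ} (hs : s ≤ 1) :
    Real.exp (-(3/2) : ℝ) / Real.sqrt (2 * Real.pi) ≤ Real.exp (s ^ 2 / 2) * Psi s := by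
  have hsqrt2 : (2:ℝ) ≤ Real.sqrt (2 * Real.pi) := by
    apply Real.le_sqrt_of_sq_le
    nlinarith [Real.pi_gt_d6]
  rcases le_or_gt s 0 with h | h
  · have h1 : Psi 0 ≤ Psi s := Psi_anti h
    have h2 : (1:ℝ) ≤ Real.exp (s ^ 2 / 2) := Real.one_le_exp (by positivity)
    have h3 : Real.exp (-(3/2) : ℝ) ≤ 1 := by
      rw [show (1:ℝ) = Real.exp 0 by rw [Real.exp_zero]]
      exact Real.exp_le_exp.2 (by norm_num)
    have h4 : Real.exp (-(3/2) : ℝ) / Real.sqrt (2 * Real.pi) ≤ 1/2 := by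
      rw [div_le_iff₀ sqrt2pi_pos]
      nlinarith
    calc Real.exp (-(3/2) : ℝ) / Real.sqrt (2 * Real.pi) ≤ 1/2 := h4
      _ = 1 * Psi 0 := by rw [Psi_zero]; ring
      _ ≤ Real.exp (s ^ 2 / 2) * Psi s :=
          mul_le_mul h2 h1 (Psi_nonneg 0) (Real.exp_pos _).le
  · have hr := Psi_rect h.le
    calc Real.exp (-(3/2) : ℝ) / Real.sqrt (2 * Real.pi)
        ≤ Real.exp (s ^ 2 / 2 - (s + 1) ^ 2 / 2) / Real.sqrt (2 * Real.pi) := by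
          gcongr
          nlinarith
      _ = Real.exp (s ^ 2 / 2) * phi (s + 1) := by
          rw [phi, show s ^ 2 / 2 - (s + 1) ^ 2 / 2 = s ^ 2 / 2 + -(s + 1) ^ 2 / 2 by ring,
            Real.exp_add]
          ring
      _ ≤ Real.exp (s ^ 2 / 2) * Psi s :=
          mul_le_mul_of_nonneg_left hr (Real.exp_pos _).le

lemma K_low_big {s : ℝ} (hs : 1 ≤ s) :
    s / (1 + s ^ 2) * (1 / Real.sqrt (2 * Real.pi)) ≤ Real.exp (s ^ 2 / 2) * Psi s := by
  have hm := mills s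
  have key : Real.exp (s ^ 2 / 2) * phi s = 1 / Real.sqrt (2 * Real.pi) := by
    rw [phi]
    have h1 : Real.exp (s ^ 2 / 2) * Real.exp (-s ^ 2 / 2) = 1 := by
      rw [← Real.exp_add]
      rw [show s ^ 2 / 2 + -s ^ 2 / 2 = 0 by ring, Real.exp_zero]
    calc Real.exp (s ^ 2 / 2) * (Real.exp (-s ^ 2 / 2) / Real.sqrt (2 * Real.pi))
        = Real.exp (s ^ 2 / 2) * Real.exp (-s ^ 2 / 2) / Real.sqrt (2 * Real.pi) := by ring
      _ = 1 / Real.sqrt (2 * Real.pi) := by rw [h1]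
  calc s / (1 + s ^ 2) * (1 / Real.sqrt (2 * Real.pi))
      = s / (1 + s ^ 2) * (Real.exp (s ^ 2 / 2) * phi s) := by rw [key]
    _ = Real.exp (s ^ 2 / 2) * (s / (1 + s ^ 2) * phi s) := by ring
    _ ≤ Real.exp (s ^ 2 / 2) * Psi s := mul_le_mul_of_nonneg_left hm (Real.exp_pos _).le

lemma Ksum {l : ℝ} (hl : 12 ≤ l) (x : ℝ) :
    1 / l * (1 / Real.sqrt (2 * Real.pi))
      ≤ Real.exp ((l - x) ^ 2 / 2) * Psi (l - x) + Real.exp ((l + x) ^ 2 / 2) * Psi (l + x) := by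
  have hlpos : (0:ℝ) < l := by linarith
  have hK1 : 0 ≤ Real.exp ((l - x) ^ 2 / 2) * Psi (l - x) :=
    mul_nonneg (Real.exp_pos _).le (Psi_nonneg _)
  have hK2 : 0 ≤ Real.exp ((l + x) ^ 2 / 2) * Psi (l + x) :=
    mul_nonneg (Real.exp_pos _).le (Psi_nonneg _)
  have hsmall : ∀ s : ℝ, s ≤ 1 → 1 / l * (1 / Real.sqrt (2 * Real.pi))
      ≤ Real.exp (s ^ 2 / 2) * Psi s := by
    intro s hs
    have h2 : 1 / l ≤ Real.exp (-(3/2) : ℝ) := by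
      rw [Real.exp_neg]
      rw [one_div]
      apply inv_anti₀ (Real.exp_pos _)
      exact le_trans exp_three_half_le hl
    calc 1 / l * (1 / Real.sqrt (2 * Real.pi))
        ≤ Real.exp (-(3/2) : ℝ) * (1 / Real.sqrt (2 * Real.pi)) := by
          apply mul_le_mul_of_nonneg_right h2 (by positivity)
      _ = Real.exp (-(3/2) : ℝ) / Real.sqrt (2 * Real.pi) := by ring
      _ ≤ Real.exp (s ^ 2 / 2) * Psi s := K_low_small hs
  rcases le_or_gt (l - x) 1 with h | h
  · calc 1 / l * (1 / Real.sqrt (2 * Real.pi)) ≤ Real.exp ((l - x) ^ 2 / 2) * Psi (l - x) :=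
          hsmall _ h
      _ ≤ _ := le_add_of_nonneg_right hK2
  rcases le_or_gt (l + x) 1 with h' | h'
  · calc 1 / l * (1 / Real.sqrt (2 * Real.pi)) ≤ Real.exp ((l + x) ^ 2 / 2) * Psi (l + x) :=
          hsmall _ h'
      _ ≤ _ := le_add_of_nonneg_left hK1
  · have hb1 := K_low_big h.le
    have hb2 := K_low_big h'.le
    have hs1 : (1:ℝ) ≤ l - x := h.le
    have ht1 : (1:ℝ) ≤ l + x := h'.le
    have hs2 : l - x ≤ 2 * l - 1 := by linarith
    have ht2 : l + x ≤ 2 * l - 1 := by linarith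
    have hw : (0:ℝ) < 2 * l - 1 := by linarith
    have m1 : (2 * l - 1) / (1 + (2 * l - 1) ^ 2) ≤ (l - x) / (1 + (l - x) ^ 2) := by
      rw [div_le_div_iff₀ (by positivity) (by positivity)]
      nlinarith [mul_nonneg (by linarith : (0:ℝ) ≤ 2 * l - 1 - (l - x))
        (by nlinarith : (0:ℝ) ≤ (l - x) * (2 * l - 1) - 1)]
    have m2 : (2 * l - 1) / (1 + (2 * l - 1) ^ 2) ≤ (l + x) / (1 + (l + x) ^ 2) := by
      rw [div_le_div_iff₀ (by positivity) (by positivity)]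
      nlinarith [mul_nonneg (by linarith : (0:ℝ) ≤ 2 * l - 1 - (l + x))
        (by nlinarith : (0:ℝ) ≤ (l + x) * (2 * l - 1) - 1)]
    have final : 1 / l ≤ 2 * ((2 * l - 1) / (1 + (2 * l - 1) ^ 2)) := by
      rw [show 2 * ((2 * l - 1) / (1 + (2 * l - 1) ^ 2))
          = (2 * (2 * l - 1)) / (1 + (2 * l - 1) ^ 2) by ring]
      rw [div_le_div_iff₀ hlpos (by positivity)]
      nlinarith
    have hsumlow : 1 / l ≤ (l - x) / (1 + (l - x) ^ 2) + (l + x) / (1 + (l + x) ^ 2) := by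
      linarith
    calc 1 / l * (1 / Real.sqrt (2 * Real.pi))
        ≤ ((l - x) / (1 + (l - x) ^ 2) + (l + x) / (1 + (l + x) ^ 2))
            * (1 / Real.sqrt (2 * Real.pi)) :=
          mul_le_mul_of_nonneg_right hsumlow (by positivity)
      _ = (l - x) / (1 + (l - x) ^ 2) * (1 / Real.sqrt (2 * Real.pi))
            + (l + x) / (1 + (l + x) ^ 2) * (1 / Real.sqrt (2 * Real.pi)) := by ring
      _ ≤ _ := add_le_add hb1 hb2

lemma g0_lower {n : ℕ} (hn : 1 ≤ n) (x : ℝ) : phi x / 2 ≤ g0 n x := by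
  have hl : 12 ≤ lam0 n := lam0_ge hn
  have hlpos : (0:ℝ) < lam0 n := by linarith
  rw [closed_form n x]
  set l := lam0 n with hldef
  have id1 : Real.exp (l ^ 2 / 2) * Real.exp (-(l * x))
      = Real.sqrt (2 * Real.pi) * phi x * Real.exp ((l - x) ^ 2 / 2) := by
    rw [phi]
    have hc : Real.sqrt (2 * Real.pi) * (Real.exp (-x ^ 2 / 2) / Real.sqrt (2 * Real.pi))
        = Real.exp (-x ^ 2 / 2) := by
      field_simp
    calc Real.exp (l ^ 2 / 2) * Real.exp (-(l * x))
        = Real.exp (l ^ 2 / 2 + -(l * x)) := (Real.exp_add _ _).symm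
      _ = Real.exp (-x ^ 2 / 2 + (l - x) ^ 2 / 2) := by congr 1; ring
      _ = Real.exp (-x ^ 2 / 2) * Real.exp ((l - x) ^ 2 / 2) := Real.exp_add _ _
      _ = Real.sqrt (2 * Real.pi) * (Real.exp (-x ^ 2 / 2) / Real.sqrt (2 * Real.pi))
            * Real.exp ((l - x) ^ 2 / 2) := by rw [hc]
  have id2 : Real.exp (l ^ 2 / 2) * Real.exp (l * x)
      = Real.sqrt (2 * Real.pi) * phi x * Real.exp ((l + x) ^ 2 / 2) := by
    rw [phi]
    have hc : Real.sqrt (2 * Real.pi) * (Real.exp (-x ^ 2 / 2) / Real.sqrt (2 * Real.pi))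
        = Real.exp (-x ^ 2 / 2) := by
      field_simp
    calc Real.exp (l ^ 2 / 2) * Real.exp (l * x)
        = Real.exp (l ^ 2 / 2 + l * x) := (Real.exp_add _ _).symm
      _ = Real.exp (-x ^ 2 / 2 + (l + x) ^ 2 / 2) := by congr 1; ring
      _ = Real.exp (-x ^ 2 / 2) * Real.exp ((l + x) ^ 2 / 2) := Real.exp_add _ _
      _ = Real.sqrt (2 * Real.pi) * (Real.exp (-x ^ 2 / 2) / Real.sqrt (2 * Real.pi))
            * Real.exp ((l + x) ^ 2 / 2) := by rw [hc]
  have hKsum := Ksum hl x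
  calc phi x / 2
      = l / 2 * Real.sqrt (2 * Real.pi) * phi x * (1 / l * (1 / Real.sqrt (2 * Real.pi))) := by
        field_simp
    _ ≤ l / 2 * Real.sqrt (2 * Real.pi) * phi x *
          (Real.exp ((l - x) ^ 2 / 2) * Psi (l - x) + Real.exp ((l + x) ^ 2 / 2) * Psi (l + x)) := by
        apply mul_le_mul_of_nonneg_left hKsum
        exact mul_nonneg (mul_nonneg (by linarith : (0:ℝ) ≤ l / 2) sqrt2pi_pos.le)
          (phi_pos x).le
    _ = l / 2 * Real.exp (l ^ 2 / 2) *
          (Real.exp (-(l * x)) * Psi (l - x) + Real.exp (l * x) * Psi (l + x)) := by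
        linear_combination (-(l / 2 * Psi (l - x))) * id1 + (-(l / 2 * Psi (l + x))) * id2

lemma g0_pos {n : ℕ} (hn : 1 ≤ n) (x : ℝ) : 0 < g0 n x :=
  lt_of_lt_of_le (half_pos (phi_pos x)) (g0_lower hn x)

lemma inv_bound {n : ℕ} (hn : 1 ≤ n) (x : ℝ) : (g0 n x)⁻¹ ≤ 2 / phi x := by
  have h1 := g0_lower hn x
  have h2 := phi_pos x
  calc (g0 n x)⁻¹ ≤ (phi x / 2)⁻¹ := inv_anti₀ (half_pos (phi_pos x)) h1
    _ = 2 / phi x := by rw [inv_div]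

/-! ### Taylor bound for phi -/

lemma phi_lip (a b : ℝ) :
    |(-a * phi a) - (-b * phi b)| ≤ (Real.sqrt (2 * Real.pi))⁻¹ * |a - b| := by
  have hd : ∀ y : ℝ, HasDerivAt (fun y => -y * phi y) ((y ^ 2 - 1) * phi y) y := by
    intro y
    have hid : HasDerivAt (fun y : ℝ => -y) (-1) y := by
      exact (hasDerivAt_id y).neg.congr_deriv (by ring)
    have := hid.mul (hasDerivAt_phi y)
    refine this.congr_deriv ?_
    ring
  have H := Convex.norm_image_sub_le_of_norm_hasDerivWithin_le
    (f := fun y : ℝ => -y * phi y) (f' := fun y => (y ^ 2 - 1) * phi y)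
    (C := (Real.sqrt (2 * Real.pi))⁻¹) (s := univ)
    (fun y _ => (hd y).hasDerivWithinAt)
    (fun y _ => by rw [Real.norm_eq_abs]; exact phi_snd_bound y)
    convex_univ (mem_univ b) (mem_univ a)
  simpa only [Real.norm_eq_abs] using H

lemma taylor_phi (x u : ℝ) :
    |phi (x - u) - phi x + u * (-x * phi x)| ≤ (Real.sqrt (2 * Real.pi))⁻¹ / 2 * u ^ 2 := by
  have hg : ∀ t : ℝ, HasDerivAt (fun t => phi (x - t) + t * (-x * phi x))
      ((x - t) * phi (x - t) + -x * phi x) t := by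
    intro t
    have hinner : HasDerivAt (fun t : ℝ => x - t) (-1) t := by
      simpa using (hasDerivAt_id t).const_sub x
    have h1 : HasDerivAt (fun t : ℝ => phi (x - t)) ((x - t) * phi (x - t)) t := by
      have := (hasDerivAt_phi (x - t)).comp t hinner
      refine this.congr_deriv ?_
      ring
    have h2 : HasDerivAt (fun t : ℝ => t * (-x * phi x)) (-x * phi x) t := by
      simpa using (hasDerivAt_id t).mul_const (-x * phi x)
    exact h1.add h2
  have hcont : Continuous fun t : ℝ => (x - t) * phi (x - t) + -x * phi x := by
    apply Continuous.add _ continuous_const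
    exact (continuous_const.sub continuous_id).mul
      (phi_cont.comp (continuous_const.sub continuous_id))
  have key : phi (x - u) - phi x + u * (-x * phi x)
      = ∫ t in (0:ℝ)..u, ((x - t) * phi (x - t) + -x * phi x) := by
    rw [intervalIntegral.integral_eq_sub_of_hasDerivAt (fun t _ => hg t)
      (hcont.intervalIntegrable _ _)]
    simp
    ring
  rw [key]
  have hb : ∀ t : ℝ, ‖(x - t) * phi (x - t) + -x * phi x‖
      ≤ (Real.sqrt (2 * Real.pi))⁻¹ * |t| := by
    intro t
    have h := phi_lip (x - t) x
    rw [Real.norm_eq_abs,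
      show (x - t) * phi (x - t) + -x * phi x
        = -((-(x - t) * phi (x - t)) - (-x * phi x)) by ring, abs_neg]
    calc |(-(x - t) * phi (x - t)) - (-x * phi x)|
        ≤ (Real.sqrt (2 * Real.pi))⁻¹ * |x - t - x| := h
      _ = (Real.sqrt (2 * Real.pi))⁻¹ * |t| := by
          rw [show x - t - x = -t by ring, abs_neg]
  have hInt : IntervalIntegrable (fun t : ℝ => (Real.sqrt (2 * Real.pi))⁻¹ * |t|) volume 0 u :=
    (continuous_const.mul continuous_abs).intervalIntegrable _ _
  have habs := intervalIntegral.norm_integral_le_abs_of_norm_le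
    (ae_of_all _ fun t => hb t) hInt
  refine le_trans habs (le_of_eq ?_)
  rcases le_or_gt 0 u with hu | hu
  · have heq : EqOn (fun t : ℝ => (Real.sqrt (2 * Real.pi))⁻¹ * |t|)
        (fun t : ℝ => (Real.sqrt (2 * Real.pi))⁻¹ * t) (uIcc 0 u) := by
      intro t ht
      rw [uIcc_of_le hu] at ht
      simp only
      rw [abs_of_nonneg ht.1]
    rw [intervalIntegral.integral_congr heq, intervalIntegral.integral_const_mul, integral_id]
    have h0 : (0:ℝ) ≤ (Real.sqrt (2 * Real.pi))⁻¹ * ((u ^ 2 - 0 ^ 2) / 2) := by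
      have he : u ^ 2 - 0 ^ 2 = u ^ 2 := by ring
      rw [he]
      positivity
    rw [abs_of_nonneg h0]
    ring
  · have heq : EqOn (fun t : ℝ => (Real.sqrt (2 * Real.pi))⁻¹ * |t|)
        (fun t : ℝ => -(Real.sqrt (2 * Real.pi))⁻¹ * t) (uIcc 0 u) := by
      intro t ht
      rw [uIcc_of_ge hu.le] at ht
      simp only
      rw [abs_of_nonpos ht.2]
      ring
    rw [intervalIntegral.integral_congr heq, intervalIntegral.integral_const_mul, integral_id]
    have hnp : -(Real.sqrt (2 * Real.pi))⁻¹ * ((u ^ 2 - 0 ^ 2) / 2) ≤ 0 := by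
      have h0 : (0:ℝ) ≤ (Real.sqrt (2 * Real.pi))⁻¹ * ((u ^ 2 - 0 ^ 2) / 2) := by
        have he : u ^ 2 - 0 ^ 2 = u ^ 2 := by ring
        rw [he]
        positivity
      linarith
    rw [abs_of_nonpos hnp]
    ring

/-! ### Moments of gamma0 -/

lemma integral_even {g : ℝ → ℝ} (he : ∀ u, g (-u) = g u) (hint : Integrable g) :
    ∫ u, g u = 2 * ∫ u in Ioi (0:ℝ), g u := by
  have hsplit := intervalIntegral.integral_Iic_add_Ioi (b := (0:ℝ))
    hint.integrableOn hint.integrableOn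
  have hrefl : ∫ u in Iic (0:ℝ), g u = ∫ u in Ioi (0:ℝ), g u := by
    rw [integral_Iic_reflect g]
    simp_rw [he]
  linarith

lemma integrableOn_gamma0_Ioi {n : ℕ} (hn : 1 ≤ n) :
    IntegrableOn (gamma0 n) (Ioi (0:ℝ)) := by
  have hl := lam0_pos hn
  have h := (exp_neg_integrableOn_Ioi (0:ℝ) hl).const_mul (lam0 n / 2)
  apply IntegrableOn.congr_fun h _ measurableSet_Ioi
  intro u hu
  show lam0 n / 2 * Real.exp (-lam0 n * u) = gamma0 n u
  rw [gamma0_eq, abs_of_nonneg (le_of_lt hu), neg_mul]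

lemma integrable_gamma0 {n : ℕ} (hn : 1 ≤ n) : Integrable (gamma0 n) :=
  integrable_even (gamma0_even n) (integrableOn_gamma0_Ioi hn)

lemma setIntegral_gamma0_Ioi {n : ℕ} (hn : 1 ≤ n) :
    ∫ u in Ioi (0:ℝ), gamma0 n u = lam0 n / 2 * (1 / lam0 n) := by
  have hl := lam0_pos hn
  have hcong : ∀ u ∈ Ioi (0:ℝ), gamma0 n u = lam0 n / 2 * Real.exp (-(lam0 n * u)) := by
    intro u hu
    rw [gamma0_eq, abs_of_nonneg (le_of_lt hu)]
  rw [setIntegral_congr_fun measurableSet_Ioi hcong, integral_const_mul, integral_exp_Ioi hl]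

lemma integral_gamma0 {n : ℕ} (hn : 1 ≤ n) : ∫ u, gamma0 n u = 1 := by
  have hl := lam0_pos hn
  rw [integral_even (gamma0_even n) (integrable_gamma0 hn), setIntegral_gamma0_Ioi hn]
  field_simp

lemma u2_exp_bound {l t : ℝ} (hl : 0 < l) (ht : 0 ≤ t) :
    t ^ 2 * (l / 2 * Real.exp (-(l * t)))
      ≤ 8 / (Real.exp 2 * l) * Real.exp (-(l / 2 * t)) := by
  have hz : l * t / 4 ≤ Real.exp (l * t / 4 - 1) := by
    have := Real.add_one_le_exp (l * t / 4 - 1)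
    linarith
  have h2 : (l * t / 4) ^ 2 ≤ Real.exp (l * t / 4 - 1) ^ 2 :=
    pow_le_pow_left₀ (by positivity) hz 2
  have h3 : Real.exp (l * t / 4 - 1) ^ 2 = Real.exp (l * t / 2 - 2) := by
    rw [sq, ← Real.exp_add]
    congr 1
    ring
  have stepA : t ^ 2 ≤ 16 / l ^ 2 * Real.exp (l * t / 2 - 2) := by
    have h4 : (l * t / 4) ^ 2 ≤ Real.exp (l * t / 2 - 2) := h3 ▸ h2
    have h5 : t ^ 2 = 16 / l ^ 2 * (l * t / 4) ^ 2 := by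
      field_simp
      ring
    rw [h5]
    apply mul_le_mul_of_nonneg_left h4 (by positivity)
  calc t ^ 2 * (l / 2 * Real.exp (-(l * t)))
      ≤ (16 / l ^ 2 * Real.exp (l * t / 2 - 2)) * (l / 2 * Real.exp (-(l * t))) := by
        apply mul_le_mul_of_nonneg_right stepA (by positivity)
    _ = 8 / l * (Real.exp (l * t / 2 - 2) * Real.exp (-(l * t))) := by
        field_simp
        ring
    _ = 8 / l * Real.exp (-(l / 2 * t) + -2) := by
        rw [← Real.exp_add]
        congr 2
        ring
    _ = 8 / (Real.exp 2 * l) * Real.exp (-(l / 2 * t)) := by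
        have hee : Real.exp (-(2:ℝ)) = (Real.exp 2)⁻¹ := Real.exp_neg 2
        rw [Real.exp_add, hee]
        have h2 : Real.exp 2 ≠ 0 := (Real.exp_pos 2).ne'
        have hl' : l ≠ 0 := hl.ne'
        field_simp

lemma integrableOn_u2_gamma0_Ioi {n : ℕ} (hn : 1 ≤ n) :
    IntegrableOn (fun u : ℝ => u ^ 2 * gamma0 n u) (Ioi (0:ℝ)) := by
  have hl := lam0_pos hn
  have hmaj : IntegrableOn (fun u : ℝ => 8 / (Real.exp 2 * lam0 n) * Real.exp (-(lam0 n / 2 * u)))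
      (Ioi (0:ℝ)) := by
    have := (exp_neg_integrableOn_Ioi (0:ℝ) (by positivity : (0:ℝ) < lam0 n / 2)).const_mul
      (8 / (Real.exp 2 * lam0 n))
    apply IntegrableOn.congr_fun this _ measurableSet_Ioi
    intro u _
    show 8 / (Real.exp 2 * lam0 n) * Real.exp (-(lam0 n / 2) * u)
      = 8 / (Real.exp 2 * lam0 n) * Real.exp (-(lam0 n / 2 * u))
    rw [neg_mul]
  apply Integrable.mono' hmaj
  · apply Continuous.aestronglyMeasurable
    apply Continuous.mul (continuous_pow 2)
    unfold gamma0
    fun_prop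
  · rw [ae_restrict_iff' measurableSet_Ioi]
    refine ae_of_all _ fun u hu => ?_
    have hu0 : (0:ℝ) ≤ u := le_of_lt hu
    rw [Real.norm_eq_abs,
      abs_of_nonneg (mul_nonneg (by positivity) (gamma0_nonneg n u))]
    rw [gamma0_eq, abs_of_nonneg hu0]
    exact u2_exp_bound hl hu0

lemma integrable_u2_gamma0 {n : ℕ} (hn : 1 ≤ n) :
    Integrable (fun u : ℝ => u ^ 2 * gamma0 n u) := by
  apply integrable_even _ (integrableOn_u2_gamma0_Ioi hn)
  intro u
  rw [gamma0_even, neg_sq]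

lemma moment2 {n : ℕ} (hn : 1 ≤ n) :
    ∫ u, u ^ 2 * gamma0 n u ≤ 32 / (Real.exp 2 * lam0 n ^ 2) := by
  have hl := lam0_pos hn
  have heven : ∀ u : ℝ, (-u) ^ 2 * gamma0 n (-u) = u ^ 2 * gamma0 n u := by
    intro u
    rw [gamma0_even]
    ring
  have he2 : (∫ u, u ^ 2 * gamma0 n u) = 2 * ∫ u in Ioi (0:ℝ), u ^ 2 * gamma0 n u :=
    integral_even heven (integrable_u2_gamma0 hn)
  rw [he2]
  have hmaj : IntegrableOn (fun u : ℝ => 8 / (Real.exp 2 * lam0 n) * Real.exp (-(lam0 n / 2 * u)))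
      (Ioi (0:ℝ)) := by
    have := (exp_neg_integrableOn_Ioi (0:ℝ) (by positivity : (0:ℝ) < lam0 n / 2)).const_mul
      (8 / (Real.exp 2 * lam0 n))
    apply IntegrableOn.congr_fun this _ measurableSet_Ioi
    intro u _
    show 8 / (Real.exp 2 * lam0 n) * Real.exp (-(lam0 n / 2) * u)
      = 8 / (Real.exp 2 * lam0 n) * Real.exp (-(lam0 n / 2 * u))
    rw [neg_mul]
  have hmono : ∫ u in Ioi (0:ℝ), u ^ 2 * gamma0 n u
      ≤ ∫ t in Ioi (0:ℝ), 8 / (Real.exp 2 * lam0 n) * Real.exp (-(lam0 n / 2 * t)) := by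
    apply setIntegral_mono_on (integrableOn_u2_gamma0_Ioi hn) hmaj measurableSet_Ioi
    intro t ht
    have ht0 : (0:ℝ) ≤ t := le_of_lt ht
    rw [gamma0_eq, abs_of_nonneg ht0]
    exact u2_exp_bound hl ht0
  have hval : ∫ t in Ioi (0:ℝ), 8 / (Real.exp 2 * lam0 n) * Real.exp (-(lam0 n / 2 * t))
      = 16 / (Real.exp 2 * lam0 n ^ 2) := by
    rw [integral_const_mul, integral_exp_Ioi (by positivity : (0:ℝ) < lam0 n / 2)]
    field_simp
    ring
  rw [hval] at hmono
  have h32 : 2 * (16 / (Real.exp 2 * lam0 n ^ 2)) = 32 / (Real.exp 2 * lam0 n ^ 2) := by ring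
  linarith

lemma integrable_u_gamma0 {n : ℕ} (hn : 1 ≤ n) :
    Integrable (fun u : ℝ => u * gamma0 n u) := by
  apply Integrable.mono' ((integrable_u2_gamma0 hn).add (integrable_gamma0 hn))
  · apply Continuous.aestronglyMeasurable
    apply Continuous.mul continuous_id
    unfold gamma0
    fun_prop
  · refine ae_of_all _ fun u => ?_
    simp only [Pi.add_apply, Real.norm_eq_abs, abs_mul]
    rw [abs_of_nonneg (gamma0_nonneg n u)]
    have h1 : |u| ≤ u ^ 2 + 1 := by nlinarith [sq_abs u, abs_nonneg u, sq_nonneg (|u| - 1)]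
    nlinarith [mul_le_mul_of_nonneg_right h1 (gamma0_nonneg n u)]

lemma integral_u_gamma0 {n : ℕ} (hn : 1 ≤ n) : ∫ u, u * gamma0 n u = 0 := by
  have hint := integrable_u_gamma0 hn
  have hsplit := intervalIntegral.integral_Iic_add_Ioi (b := (0:ℝ)) hint.integrableOn hint.integrableOn
  have hrefl : ∫ u in Iic (0:ℝ), u * gamma0 n u = - ∫ u in Ioi (0:ℝ), u * gamma0 n u := by
    have hre := integral_Iic_reflect (fun u => u * gamma0 n u)
    rw [hre]
    have : ∀ u : ℝ, -u * gamma0 n (-u) = -(u * gamma0 n u) := by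
      intro u
      rw [gamma0_even]
      ring
    simp_rw [this]
    rw [integral_neg]
  rw [hrefl] at hsplit
  linarith

/-! ### The bound |g0 - phi| ≤ 1/l² -/

lemma e2sqrt : (16:ℝ) ≤ Real.sqrt (2 * Real.pi) * Real.exp 2 := by
  have h1 : (2.5:ℝ) ≤ Real.sqrt (2 * Real.pi) := by
    apply Real.le_sqrt_of_sq_le
    nlinarith [Real.pi_gt_d6]
  have h2 : (7.38:ℝ) ≤ Real.exp 2 := by
    have he : (2.7182818283:ℝ) ≤ Real.exp 1 := Real.exp_one_gt_d9.le
    have : Real.exp 2 = Real.exp 1 ^ 2 := by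
      rw [← Real.exp_nat_mul]
      norm_num
    nlinarith [Real.exp_pos 1]
  nlinarith [Real.exp_pos 2, sqrt2pi_pos]

lemma g0_close {n : ℕ} (hn : 1 ≤ n) (x : ℝ) : |g0 n x - phi x| ≤ (lam0 n ^ 2)⁻¹ := by
  have hl := lam0_pos hn
  have hint_conv := integrable_conv n x
  have hint_g := integrable_gamma0 hn
  have hint_u := integrable_u_gamma0 hn
  have hint_u2 := integrable_u2_gamma0 hn
  have hrep : g0 n x - phi x
      = ∫ u, (phi (x - u) - phi x + u * (-x * phi x)) * gamma0 n u := by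
    have hfun : (fun u => (phi (x - u) - phi x + u * (-x * phi x)) * gamma0 n u)
        = fun u => (phi (x - u) * gamma0 n u - phi x * gamma0 n u)
            + (-x * phi x) * (u * gamma0 n u) := by
      funext u
      ring
    have hint1 : Integrable (fun u => phi (x - u) * gamma0 n u - phi x * gamma0 n u) :=
      hint_conv.sub (hint_g.const_mul (phi x))
    have hint2 : Integrable (fun u => -x * phi x * (u * gamma0 n u)) :=
      hint_u.const_mul (-x * phi x)
    rw [hfun, integral_add hint1 hint2,
      integral_sub hint_conv (hint_g.const_mul (phi x)),
      integral_const_mul, integral_const_mul, integral_u_gamma0 hn, integral_gamma0 hn]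
    rw [g0]
    ring
  rw [hrep]
  have habs : |∫ u, (phi (x - u) - phi x + u * (-x * phi x)) * gamma0 n u|
      ≤ ∫ u, |(phi (x - u) - phi x + u * (-x * phi x)) * gamma0 n u| := by
    have := norm_integral_le_integral_norm
      (μ := volume) (f := fun u => (phi (x - u) - phi x + u * (-x * phi x)) * gamma0 n u)
    simpa only [Real.norm_eq_abs] using this
  have hcomp : (∫ u, |(phi (x - u) - phi x + u * (-x * phi x)) * gamma0 n u|)
      ≤ ∫ u, (Real.sqrt (2 * Real.pi))⁻¹ / 2 * (u ^ 2 * gamma0 n u) := by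
    apply integral_mono_of_nonneg (ae_of_all _ fun u => abs_nonneg _)
      (hint_u2.const_mul _)
    refine ae_of_all _ fun u => ?_
    simp only
    rw [abs_mul, abs_of_nonneg (gamma0_nonneg n u)]
    calc |phi (x - u) - phi x + u * (-x * phi x)| * gamma0 n u
        ≤ ((Real.sqrt (2 * Real.pi))⁻¹ / 2 * u ^ 2) * gamma0 n u :=
          mul_le_mul_of_nonneg_right (taylor_phi x u) (gamma0_nonneg n u)
      _ = (Real.sqrt (2 * Real.pi))⁻¹ / 2 * (u ^ 2 * gamma0 n u) := by ring
  have hm2 := moment2 hn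
  calc |∫ u, (phi (x - u) - phi x + u * (-x * phi x)) * gamma0 n u|
      ≤ ∫ u, |(phi (x - u) - phi x + u * (-x * phi x)) * gamma0 n u| := habs
    _ ≤ ∫ u, (Real.sqrt (2 * Real.pi))⁻¹ / 2 * (u ^ 2 * gamma0 n u) := hcomp
    _ = (Real.sqrt (2 * Real.pi))⁻¹ / 2 * ∫ u, u ^ 2 * gamma0 n u := integral_const_mul _ _
    _ ≤ (Real.sqrt (2 * Real.pi))⁻¹ / 2 * (32 / (Real.exp 2 * lam0 n ^ 2)) := by
        apply mul_le_mul_of_nonneg_left hm2 (by positivity)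
    _ ≤ (lam0 n ^ 2)⁻¹ := by
        have h16 := e2sqrt
        have hpos : (0:ℝ) < Real.sqrt (2 * Real.pi) * Real.exp 2 := by
          positivity
        have heq : (Real.sqrt (2 * Real.pi))⁻¹ / 2 * (32 / (Real.exp 2 * lam0 n ^ 2))
            = 16 / (Real.sqrt (2 * Real.pi) * Real.exp 2) * (lam0 n ^ 2)⁻¹ := by
          field_simp
          ring
        rw [heq]
        calc 16 / (Real.sqrt (2 * Real.pi) * Real.exp 2) * (lam0 n ^ 2)⁻¹
            ≤ 1 * (lam0 n ^ 2)⁻¹ := by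
              apply mul_le_mul_of_nonneg_right _ (by positivity)
              exact (div_le_one hpos).2 h16
          _ = (lam0 n ^ 2)⁻¹ := one_mul _

end G0Aux

/-- Lemma: properties of `g₀ = φ * γ₀`.
`g₀'' = λ₀² (g₀ - φ)` on `ℝ`, and for `n` large enough,
`1/g₀ ≤ 2/φ` and `|g₀ - φ| ≤ 1/λ₀²` everywhere. -/
theorem g0_properties :
    (∀ n : ℕ, ∀ x : ℝ, deriv (deriv (g0 n)) x = lam0 n ^ 2 * (g0 n x - phi x)) ∧
    (∃ N0 : ℕ, ∀ n : ℕ, N0 ≤ n → ∀ x : ℝ,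
      (g0 n x)⁻¹ ≤ 2 / phi x ∧ |g0 n x - phi x| ≤ (lam0 n ^ 2)⁻¹) := by
  constructor
  · exact fun n x => G0Aux.ode n x
  · exact ⟨1, fun n hn x => ⟨G0Aux.inv_bound hn x, G0Aux.g0_close hn x⟩⟩

end
end
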